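/- arXiv:1203.3287 — 11 statements merged into one kernel-verified Lean document; each statement's English description precedes it below -/
import Mathlib

section
/- Let α > 2 be a real number and let ω > 0. Then ∫_{ℝ²} [1 − (‖x‖^α/(‖x‖^α + ω))²] dx = (1 + 2/α) · C_α · ω^{2/α}, where C_α = (2π/α)·Γ(2/α)·Γ(1 − 2/α). (The integrand equals 1 − 1/(1 + ω‖x‖^{−α})² for x ≠ 0.) -/
open MeasureTheory Real
open Set



lemma real_beta {a b : ℝ} (ha : 0 < a) (hb : 0 < b) :
    ∫ t in Ioo (0:ℝ) 1, t ^ (a-1) * (1-t) ^ (b-1) = Gamma a * Gamma b / Gamma (a+b) := by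
  have h := Complex.Gamma_mul_Gamma_eq_betaIntegral (s := (a:ℂ)) (t := (b:ℂ))
    (by simpa using ha) (by simpa using hb)
  rw [Complex.betaIntegral, intervalIntegral.integral_of_le zero_le_one] at h
  have hcong : (∫ x in Ioc (0:ℝ) 1, (x:ℂ) ^ ((a:ℂ)-1) * ((1:ℂ)-(x:ℂ)) ^ ((b:ℂ)-1))
      = ((∫ x in Ioo (0:ℝ) 1, x ^ (a-1) * (1-x) ^ (b-1) : ℝ) : ℂ) := by
    rw [integral_Ioc_eq_integral_Ioo]
    calc (∫ x in Ioo (0:ℝ) 1, (x:ℂ) ^ ((a:ℂ)-1) * ((1:ℂ)-(x:ℂ)) ^ ((b:ℂ)-1))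
        = ∫ x in Ioo (0:ℝ) 1, ((x ^ (a-1) * (1-x) ^ (b-1) : ℝ) : ℂ) := by
          refine setIntegral_congr_ae measurableSet_Ioo
            (Filter.Eventually.of_forall fun x hx => ?_)
          rw [Complex.ofReal_mul, Complex.ofReal_cpow hx.1.le,
            Complex.ofReal_cpow (by linarith [hx.2] : (0:ℝ) ≤ 1 - x)]
          push_cast
          ring
      _ = ((∫ x in Ioo (0:ℝ) 1, x ^ (a-1) * (1-x) ^ (b-1) : ℝ) : ℂ) := integral_ofReal
  rw [hcong, ← Complex.ofReal_add, Complex.Gamma_ofReal, Complex.Gamma_ofReal,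
    Complex.Gamma_ofReal, ← Complex.ofReal_mul, ← Complex.ofReal_mul] at h
  have h2 := Complex.ofReal_inj.mp h
  have hg : Gamma (a+b) ≠ 0 := (Real.Gamma_pos_of_pos (by linarith)).ne'
  rw [h2]
  field_simp

section
variable {a b : ℝ}

lemma psi_image : (fun t : ℝ => t / (1 - t)) '' Ioo 0 1 = Ioi 0 := by
  ext z
  constructor
  · rintro ⟨t, ⟨ht0, ht1⟩, rfl⟩
    exact div_pos ht0 (by linarith)
  · intro hz
    refine ⟨z / (1 + z), ⟨div_pos hz (by linarith [mem_Ioi.mp hz]), ?_⟩, ?_⟩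
    · rw [div_lt_one (by linarith [mem_Ioi.mp hz])]; linarith [mem_Ioi.mp hz]
    · have h1z : (1:ℝ) + z ≠ 0 := by have := mem_Ioi.mp hz; positivity
      field_simp
      ring

lemma psi_deriv {t : ℝ} (ht : t ∈ Ioo (0:ℝ) 1) :
    HasDerivWithinAt (fun t : ℝ => t / (1 - t)) (((1 - t) ^ 2)⁻¹) (Ioo 0 1) t := by
  have h1t : (1:ℝ) - t ≠ 0 := ne_of_gt (by linarith [ht.2])
  have := (hasDerivAt_id t).div ((hasDerivAt_id t).const_sub 1) h1t
  have h2 : (1 - t - t * -1) / (1 - t) ^ 2 = ((1 - t) ^ 2)⁻¹ := by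
    field_simp
    ring
  simpa [h2, Pi.div_def] using this.hasDerivWithinAt

lemma psi_inj : InjOn (fun t : ℝ => t / (1 - t)) (Ioo 0 1) := by
  intro x hx y hy h
  have hx1 : (1:ℝ) - x ≠ 0 := ne_of_gt (by linarith [hx.2])
  have hy1 : (1:ℝ) - y ≠ 0 := ne_of_gt (by linarith [hy.2])
  field_simp at h
  linarith

lemma psi_pointwise (a b : ℝ) {t : ℝ} (ht : t ∈ Ioo (0:ℝ) 1) :
    |((1 - t) ^ 2)⁻¹| • ((t / (1 - t)) ^ (a-1) * (1 + t / (1 - t)) ^ (-(a+b)))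
      = t ^ (a-1) * (1-t) ^ (b-1) := by
  obtain ⟨ht0, ht1⟩ := ht
  have h1t : (0:ℝ) < 1 - t := by linarith
  have e2 : (1:ℝ) + t / (1 - t) = (1 - t)⁻¹ := by field_simp; ring
  have k1 : (t/(1-t)) ^ (a-1) = t ^ (a-1) * (1-t) ^ (1-a) := by
    rw [Real.div_rpow ht0.le h1t.le, div_eq_mul_inv, ← Real.rpow_neg h1t.le,
      (by ring : -(a-1) = 1-a)]
  have k2 : ((1-t)⁻¹) ^ (-(a+b)) = (1-t) ^ (a+b) := by
    rw [← Real.rpow_neg_one (1-t), ← Real.rpow_mul h1t.le]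
    norm_num
  have k3 : ((((1:ℝ)-t) ^ (2:ℕ))⁻¹ : ℝ) = (1-t) ^ (-2:ℝ) := by
    rw [← Real.rpow_natCast (1-t) 2, ← Real.rpow_neg h1t.le]
    norm_num
  have k4 : (1-t) ^ (-2:ℝ) * ((1-t) ^ (1-a) * (1-t) ^ (a+b)) = (1-t) ^ (b-1) := by
    rw [← Real.rpow_add h1t, ← Real.rpow_add h1t]
    ring_nf
  rw [smul_eq_mul, abs_of_pos (by positivity), e2, k1, k2, k3, ← k4]
  ring

lemma beta_Ioi (ha : 0 < a) (hb : 0 < b) :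
    ∫ x in Ioi (0:ℝ), x ^ (a-1) * (1+x) ^ (-(a+b)) = Gamma a * Gamma b / Gamma (a+b) := by
  rw [← psi_image, integral_image_eq_integral_abs_deriv_smul measurableSet_Ioo
    (fun t ht => psi_deriv ht) psi_inj]
  rw [setIntegral_congr_fun measurableSet_Ioo (fun t ht => psi_pointwise a b ht)]
  exact real_beta ha hb

lemma beta_Ioi_integrable (ha : 0 < a) (hb : 0 < b) :
    IntegrableOn (fun x : ℝ => x ^ (a-1) * (1+x) ^ (-(a+b))) (Ioi 0) := by
  rw [← psi_image, integrableOn_image_iff_integrableOn_abs_deriv_smul measurableSet_Ioo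
    (fun t ht => psi_deriv ht) psi_inj]
  have hc := (Complex.betaIntegral_convergent (u := (a:ℂ)) (v := (b:ℂ))
    (by simpa using ha) (by simpa using hb))
  rw [intervalIntegrable_iff_integrableOn_Ioc_of_le zero_le_one] at hc
  have hre : IntegrableOn (fun x : ℝ => ((x:ℂ) ^ ((a:ℂ)-1) * ((1:ℂ)-(x:ℂ)) ^ ((b:ℂ)-1)).re)
      (Ioc 0 1) := hc.re
  refine IntegrableOn.congr_fun (IntegrableOn.mono_set hre Ioo_subset_Ioc_self) ?_ measurableSet_Ioo
  intro t ht
  simp only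
  rw [psi_pointwise a b ht]
  have h1t : (0:ℝ) ≤ 1 - t := by linarith [ht.2]
  rw [show ((t:ℂ) ^ ((a:ℂ)-1) * ((1:ℂ)-(t:ℂ)) ^ ((b:ℂ)-1))
      = ((t ^ (a-1) * (1-t) ^ (b-1) : ℝ) : ℂ) from by
    rw [Complex.ofReal_mul, Complex.ofReal_cpow ht.1.le, Complex.ofReal_cpow h1t]
    push_cast; ring]
  rw [Complex.ofReal_re]
end

lemma split_integral {s : ℝ} (hs0 : 0 < s) (hs1 : s < 1) :
    ∫ y in Ioi (0:ℝ), y ^ (s-1) * (1 - (y/(y+1)) ^ 2)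
      = (1 + s) * (Gamma s * Gamma (1-s)) := by
  have h1s : (0:ℝ) < 1 - s := by linarith
  have hpt : ∀ y ∈ Ioi (0:ℝ), y ^ (s-1) * (1 - (y/(y+1)) ^ 2)
      = 2 * (y ^ ((s+1)-1) * (1+y) ^ (-((s+1)+(1-s)))) + y ^ (s-1) * (1+y) ^ (-(s+(2-s))) := by
    intro y hy
    have hy : (0:ℝ) < y := hy
    have hy1 : (0:ℝ) < 1 + y := by linarith
    have e1 : y ^ ((s+1)-1) = y * y ^ (s-1) := by
      rw [show (s+1)-1 = (s-1)+1 by ring, Real.rpow_add hy, Real.rpow_one]; ring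
    have e2 : (1+y) ^ (-((s+1)+(1-s))) = (((1+y) ^ (2:ℕ) : ℝ))⁻¹ := by
      rw [show -((s+1)+(1-s)) = -((2:ℕ):ℝ) by push_cast; ring,
        Real.rpow_neg hy1.le, Real.rpow_natCast]
    have e3 : (1+y) ^ (-(s+(2-s))) = (((1+y) ^ (2:ℕ) : ℝ))⁻¹ := by
      rw [show -(s+(2-s)) = -((2:ℕ):ℝ) by push_cast; ring,
        Real.rpow_neg hy1.le, Real.rpow_natCast]
    rw [e1, e2, e3]
    have hne : ((1+y) ^ (2:ℕ) : ℝ) ≠ 0 := by positivity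
    have hne2 : (y + 1 : ℝ) ≠ 0 := by positivity
    field_simp
    ring
  rw [setIntegral_congr_fun measurableSet_Ioi hpt,
    integral_add ((beta_Ioi_integrable (by linarith) h1s).const_mul 2)
      (beta_Ioi_integrable hs0 (by linarith)),
    MeasureTheory.integral_const_mul, beta_Ioi (by linarith : (0:ℝ) < s+1) h1s,
    beta_Ioi hs0 (by linarith : (0:ℝ) < 2-s)]
  rw [show (s+1)+(1-s) = (2:ℝ) by ring, show s+(2-s) = (2:ℝ) by ring, Real.Gamma_two,
    Real.Gamma_add_one hs0.ne', show (2:ℝ)-s = (1-s)+1 by ring,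
    Real.Gamma_add_one h1s.ne']
  field_simp
  ring

lemma key_integral (α ω : ℝ) (hα : 2 < α) (hω : 0 < ω) :
    ∫ r in Ioi (0:ℝ), r * (1 - (r ^ α / (r ^ α + ω)) ^ 2)
      = ω ^ (2/α) * α⁻¹ * ((1 + 2/α) * (Gamma (2/α) * Gamma (1 - 2/α))) := by
  have hα0 : (0:ℝ) < α := by linarith
  have hαne : α ≠ 0 := hα0.ne'
  set c : ℝ := ω ^ α⁻¹ with hc
  have hcpos : 0 < c := Real.rpow_pos_of_pos hω _
  have himg : (fun y : ℝ => c * y ^ α⁻¹) '' Ioi 0 = Ioi 0 := by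
    ext z
    constructor
    · rintro ⟨y, hy, rfl⟩
      exact mul_pos hcpos (Real.rpow_pos_of_pos hy _)
    · intro hz
      have hz' : (0:ℝ) < z := hz
      refine ⟨(z / c) ^ α, Real.rpow_pos_of_pos (div_pos hz' hcpos) _, ?_⟩
      simp only
      rw [Real.rpow_rpow_inv (div_pos hz' hcpos).le hαne]
      field_simp
  have hderiv : ∀ y ∈ Ioi (0:ℝ),
      HasDerivWithinAt (fun y : ℝ => c * y ^ α⁻¹) (c * (α⁻¹ * y ^ (α⁻¹ - 1))) (Ioi 0) y :=
    fun y hy => ((Real.hasDerivAt_rpow_const (Or.inl (ne_of_gt hy))).const_mul c).hasDerivWithinAt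
  have hinj : InjOn (fun y : ℝ => c * y ^ α⁻¹) (Ioi 0) := by
    intro x hx y hy h
    simp only at h
    have h2 : x ^ α⁻¹ = y ^ α⁻¹ := mul_left_cancel₀ hcpos.ne' h
    have := congrArg (fun t : ℝ => t ^ α) h2
    simpa [Real.rpow_inv_rpow (le_of_lt hx) hαne,
      Real.rpow_inv_rpow (le_of_lt hy) hαne] using this
  rw [show Ioi (0:ℝ) = (fun y : ℝ => c * y ^ α⁻¹) '' Ioi 0 from himg.symm,
    integral_image_eq_integral_abs_deriv_smul measurableSet_Ioi hderiv hinj]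
  have hpt : ∀ y ∈ Ioi (0:ℝ),
      |c * (α⁻¹ * y ^ (α⁻¹ - 1))| •
        ((c * y ^ α⁻¹) * (1 - ((c * y ^ α⁻¹) ^ α / ((c * y ^ α⁻¹) ^ α + ω)) ^ 2))
      = (ω ^ (2/α) * α⁻¹) * (y ^ (2/α - 1) * (1 - (y/(y+1)) ^ 2)) := by
    intro y hy
    have hy : (0:ℝ) < y := hy
    have habs : |c * (α⁻¹ * y ^ (α⁻¹ - 1))| = c * (α⁻¹ * y ^ (α⁻¹ - 1)) := by
      apply abs_of_pos
      have := Real.rpow_pos_of_pos hy (α⁻¹ - 1)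
      positivity
    have hpow : (c * y ^ α⁻¹) ^ α = ω * y := by
      rw [Real.mul_rpow hcpos.le (Real.rpow_pos_of_pos hy _).le, hc,
        Real.rpow_inv_rpow hω.le hαne, Real.rpow_inv_rpow hy.le hαne]
    have hfrac : ω * y / (ω * y + ω) = y / (y + 1) := by
      rw [show ω * y + ω = ω * (y + 1) by ring, mul_div_mul_left _ _ hω.ne']
    have hcc : c * c = ω ^ (2/α) := by
      rw [hc, ← Real.rpow_add hω]
      congr 1
      field_simp
      ring
    have hyy : y ^ (α⁻¹ - 1) * y ^ α⁻¹ = y ^ (2/α - 1) := by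
      rw [← Real.rpow_add hy]
      congr 1
      field_simp
      ring
    rw [smul_eq_mul, habs, hpow, hfrac, ← hcc, ← hyy]
    ring
  rw [setIntegral_congr_fun measurableSet_Ioi hpt, MeasureTheory.integral_const_mul,
    split_integral (by positivity) (by rw [div_lt_one hα0]; linarith)]

theorem stmt_1 (α ω : ℝ) (hα : 2 < α) (hω : 0 < ω) :
    (∫ x : EuclideanSpace ℝ (Fin 2),
        (1 - (‖x‖ ^ α / (‖x‖ ^ α + ω)) ^ 2)) =
      (1 + 2 / α) * ((2 * π / α) * Gamma (2 / α) * Gamma (1 - 2 / α)) * ω ^ (2 / α) := by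
  have h0 := integral_fun_norm_addHaar (volume : Measure (EuclideanSpace ℝ (Fin 2)))
    (fun r : ℝ => 1 - (r ^ α / (r ^ α + ω)) ^ 2)
  have hd : Module.finrank ℝ (EuclideanSpace ℝ (Fin 2)) = 2 := finrank_euclideanSpace_fin
  have hball : (volume (Metric.ball (0:EuclideanSpace ℝ (Fin 2)) 1)).toReal = π := by
    rw [EuclideanSpace.volume_ball]
    simp only [Fintype.card_fin]
    rw [show ((2:ℕ):ℝ)/2 + 1 = 2 by norm_num, Real.Gamma_two, Real.sq_sqrt pi_pos.le]
    simp [ENNReal.toReal_ofReal pi_pos.le]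
  rw [hd] at h0
  rw [h0, measureReal_def, hball]
  have heq : ∀ y : ℝ, y ^ (2-1 : ℕ) • (1 - (y ^ α / (y ^ α + ω)) ^ 2)
      = y * (1 - (y ^ α / (y ^ α + ω)) ^ 2) := by
    intro y; norm_num
  simp only [heq]
  rw [key_integral α ω hα hω]
  have hαne : α ≠ 0 := by positivity
  simp only [smul_eq_mul, nsmul_eq_mul, Nat.cast_ofNat]
  field_simp
end

section
/- Let α > 2 be a real number. Then the one-dimensional integral ∫₀^∞ t·(1 + 2t^α)/(1 + t^α)² dt converges and equals (1 + 2/α) · (1/α) · Γ(2/α) · Γ(1 − 2/α). -/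
open MeasureTheory Real Set Function


lemma beta_integrable {a c : ℝ} (ha : 0 < a) (hac : a < c) :
    IntegrableOn (fun u : ℝ => u ^ (a - 1) * (1 + u) ^ (-c)) (Set.Ioi 0) := by
  have hmeas : AEStronglyMeasurable (fun u : ℝ => u ^ (a - 1) * (1 + u) ^ (-c))
      (volume.restrict (Set.Ioi (0:ℝ))) := by
    apply Measurable.aestronglyMeasurable
    fun_prop
  rw [← Set.Ioc_union_Ioi_eq_Ioi (zero_le_one : (0:ℝ) ≤ 1), integrableOn_union]
  constructor
  · -- bound by u ^ (a-1)
    have hint : IntegrableOn (fun u : ℝ => u ^ (a - 1)) (Set.Ioc (0:ℝ) 1) := by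
      have := intervalIntegral.intervalIntegrable_rpow' (a := (0:ℝ)) (b := 1)
        (r := a - 1) (by linarith)
      simpa [intervalIntegrable_iff, Set.uIoc_of_le (zero_le_one : (0:ℝ) ≤ 1)] using this
    refine Integrable.mono hint (hmeas.mono_measure (Measure.restrict_mono Set.Ioc_subset_Ioi_self le_rfl)) ?_
    filter_upwards [ae_restrict_mem measurableSet_Ioc] with u hu
    have hu0 : (0:ℝ) < u := hu.1
    have h1u : (1:ℝ) ≤ 1 + u := by linarith
    rw [Real.norm_of_nonneg (by positivity), Real.norm_of_nonneg (by positivity)]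
    have : (1 + u) ^ (-c) ≤ 1 :=
      Real.rpow_le_one_of_one_le_of_nonpos h1u (by linarith)
    nlinarith [Real.rpow_pos_of_pos hu0 (a-1), Real.rpow_pos_of_pos (lt_of_lt_of_le one_pos h1u) (-c)]
  · have hint : IntegrableOn (fun u : ℝ => u ^ (a - 1 - c)) (Set.Ioi (1:ℝ)) :=
      integrableOn_Ioi_rpow_of_lt (by linarith) one_pos
    refine Integrable.mono hint (hmeas.mono_measure (Measure.restrict_mono (Set.Ioi_subset_Ioi zero_le_one) le_rfl)) ?_
    · filter_upwards [ae_restrict_mem measurableSet_Ioi] with u hu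
      have hu0 : (0:ℝ) < u := lt_trans one_pos hu
      rw [Real.norm_of_nonneg (by positivity), Real.norm_of_nonneg (by positivity)]
      have h1 : (1 + u) ^ (-c) ≤ u ^ (-c) := by
        apply Real.rpow_le_rpow_of_nonpos hu0 (by linarith) (by linarith)
      calc u ^ (a-1) * (1+u)^(-c) ≤ u ^ (a-1) * u ^ (-c) := by
            have := Real.rpow_pos_of_pos hu0 (a-1); nlinarith
        _ = u ^ (a - 1 - c) := by rw [← Real.rpow_add hu0]; ring_nf

lemma beta_value {a c : ℝ} (ha : 0 < a) (hac : a < c) :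
    ∫ u in Set.Ioi (0:ℝ), u ^ (a - 1) * (1 + u) ^ (-c)
      = Gamma a * Gamma (c - a) / Gamma c := by
  have hc : 0 < c := ha.trans hac
  set μ := volume.restrict (Set.Ioi (0:ℝ)) with hμ
  set F : ℝ → ℝ → ℝ := fun u t => u ^ (a - 1) * (t ^ (c - 1) * exp (-((1 + u) * t))) with hF
  -- inner t-integral
  have h_inner : ∀ u : ℝ, 0 < u →
      ∫ t in Set.Ioi (0:ℝ), t ^ (c - 1) * exp (-((1 + u) * t)) = (1 + u) ^ (-c) * Gamma c := by
    intro u hu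
    have h1u : (0:ℝ) < 1 + u := by linarith
    rw [integral_rpow_mul_exp_neg_mul_Ioi hc h1u, one_div, ← Real.rpow_neg_one (1+u),
      ← Real.rpow_mul h1u.le, neg_one_mul]
  -- measurability on the product
  have hmeasF : AEStronglyMeasurable (uncurry F) (μ.prod μ) := by
    apply Measurable.aestronglyMeasurable
    simp only [hF, uncurry]
    fun_prop
  -- slice integrability
  have h_slice : ∀ u : ℝ, 0 < u → Integrable (F u) μ := by
    intro u hu
    have h1u : (0:ℝ) < 1 + u := by linarith
    have h := (integrableOn_rpow_mul_exp_neg_mul_rpow (p := 1) (s := c - 1) (b := 1 + u)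
      (by linarith) one_pos h1u)
    have h' : IntegrableOn (fun t : ℝ => t ^ (c-1) * exp (-((1+u) * t))) (Set.Ioi 0) := by
      refine h.congr_fun (fun t ht => ?_) measurableSet_Ioi
      beta_reduce; rw [Real.rpow_one]; ring_nf
    exact (h'.const_mul _)
  -- integrability on the product
  have hFint : Integrable (uncurry F) (μ.prod μ) := by
    rw [integrable_prod_iff hmeasF]
    constructor
    · filter_upwards [ae_restrict_mem measurableSet_Ioi] with u hu
      exact h_slice u hu
    · have hg : Integrable (fun u : ℝ => (u ^ (a-1) * (1+u) ^ (-c)) * Gamma c) μ :=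
        (beta_integrable ha hac).mul_const _
      refine hg.congr ?_
      filter_upwards [ae_restrict_mem measurableSet_Ioi] with u hu
      have hu0 : (0:ℝ) < u := hu
      have e1 : ∫ y, ‖uncurry F (u, y)‖ ∂μ = ∫ t, F u t ∂μ := by
        rw [hμ]
        refine setIntegral_congr_fun measurableSet_Ioi (fun t ht => ?_)
        have ht0 : (0:ℝ) < t := ht
        simp only [Function.uncurry_apply_pair, hF]
        exact norm_of_nonneg (by positivity)
      have e2 : ∫ t, F u t ∂μ = u ^ (a-1) * ((1+u) ^ (-c) * Gamma c) := by
        rw [hμ]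
        simp only [hF]
        rw [MeasureTheory.integral_const_mul, h_inner u hu0]
      rw [e1, e2]; ring
  -- swap
  have hswap : ∫ u, ∫ t, F u t ∂μ ∂μ = ∫ t, ∫ u, F u t ∂μ ∂μ :=
    integral_integral_swap hFint
  -- left side
  have hL : ∫ u, ∫ t, F u t ∂μ ∂μ
      = Gamma c * ∫ u in Set.Ioi (0:ℝ), u ^ (a - 1) * (1 + u) ^ (-c) := by
    rw [hμ]
    rw [setIntegral_congr_fun measurableSet_Ioi
      (g := fun u : ℝ => Gamma c * (u ^ (a-1) * (1+u) ^ (-c))) (fun u hu => ?_)]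
    · rw [MeasureTheory.integral_const_mul]
    · have hu0 : (0:ℝ) < u := hu
      simp only [hF]
      rw [MeasureTheory.integral_const_mul, h_inner u hu0]; ring
  -- right side
  have h_inner2 : ∀ t : ℝ, 0 < t →
      ∫ u in Set.Ioi (0:ℝ), F u t = (t ^ (c-1) * exp (-t)) * ((1/t) ^ a * Gamma a) := by
    intro t ht
    have key : ∀ u ∈ Set.Ioi (0:ℝ), F u t
        = (t ^ (c-1) * exp (-t)) * (u ^ (a-1) * exp (-(t * u))) := by
      intro u hu
      simp only [hF]
      have : exp (-((1+u)*t)) = exp (-t) * exp (-(t*u)) := by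
        rw [← Real.exp_add]; ring_nf
      rw [this]; ring
    rw [setIntegral_congr_fun measurableSet_Ioi key, MeasureTheory.integral_const_mul,
      integral_rpow_mul_exp_neg_mul_Ioi ha ht]
  have hR : ∫ t, ∫ u, F u t ∂μ ∂μ = Gamma a * Gamma (c - a) := by
    rw [hμ]
    rw [setIntegral_congr_fun measurableSet_Ioi
      (g := fun t : ℝ => Gamma a * (t ^ (c - a - 1) * exp (-(1 * t)))) (fun t ht => ?_)]
    · rw [MeasureTheory.integral_const_mul, integral_rpow_mul_exp_neg_mul_Ioi (by linarith) one_pos]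
      simp
    · have ht0 : (0:ℝ) < t := ht
      show _ = Gamma a * (t ^ (c - a - 1) * exp (-(1 * t)))
      rw [h_inner2 t ht0, one_div, ← Real.rpow_neg_one t, ← Real.rpow_mul ht0.le, neg_one_mul,
        one_mul]
      rw [show t ^ (c - a - 1) = t ^ (c-1) * t ^ (-a) by rw [← Real.rpow_add ht0]; ring_nf]
      ring
  have hcne : Gamma c ≠ 0 := (Gamma_pos_of_pos hc).ne'
  rw [hswap, hR] at hL
  field_simp at hL ⊢
  linarith [hL]

theorem stmt_2 (α : ℝ) (hα : 2 < α) :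
    IntegrableOn (fun t : ℝ => t * (1 + 2 * t ^ α) / (1 + t ^ α) ^ 2) (Set.Ioi 0) ∧
    (∫ t in Set.Ioi (0 : ℝ), t * (1 + 2 * t ^ α) / (1 + t ^ α) ^ 2) =
      (1 + 2 / α) * (1 / α) * Gamma (2 / α) * Gamma (1 - 2 / α) := by
  have hα0 : (0:ℝ) < α := by linarith
  have hαne : α ≠ 0 := hα0.ne'
  set s : ℝ := 2 / α with hs
  have hs0 : 0 < s := by positivity
  have hs1 : s < 1 := by rw [hs, div_lt_one hα0]; linarith
  -- measurability of the integrand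
  have hmeas : Measurable (fun t : ℝ => t * (1 + 2 * t ^ α) / (1 + t ^ α) ^ 2) := by fun_prop
  constructor
  · -- integrability
    rw [← Set.Ioc_union_Ioi_eq_Ioi (zero_le_one : (0:ℝ) ≤ 1), integrableOn_union]
    constructor
    · refine Integrable.mono (show IntegrableOn (fun _ : ℝ => (2:ℝ)) (Set.Ioc 0 1) volume from integrableOn_const measure_Ioc_lt_top.ne)
        ((hmeas.aestronglyMeasurable).mono_measure
          (Measure.restrict_mono Set.Ioc_subset_Ioi_self le_rfl)) ?_
      filter_upwards [ae_restrict_mem measurableSet_Ioc] with t ht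
      have ht0 : (0:ℝ) < t := ht.1
      have ht1 : t ≤ 1 := ht.2
      have hu : (0:ℝ) < t ^ α := rpow_pos_of_pos ht0 _
      rw [Real.norm_of_nonneg (by positivity), Real.norm_of_nonneg (by norm_num : (0:ℝ) ≤ 2)]
      rw [div_le_iff₀ (by positivity)]
      nlinarith [sq_nonneg (t ^ α)]
    · have hint : IntegrableOn (fun t : ℝ => 2 * t ^ (1 - α)) (Set.Ioi (1:ℝ)) :=
        (integrableOn_Ioi_rpow_of_lt (by linarith) one_pos).const_mul 2
      refine Integrable.mono hint ((hmeas.aestronglyMeasurable).mono_measure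
          (Measure.restrict_mono (Set.Ioi_subset_Ioi zero_le_one) le_rfl)) ?_
      filter_upwards [ae_restrict_mem measurableSet_Ioi] with t ht
      have ht0 : (0:ℝ) < t := lt_trans one_pos ht
      have hu : (0:ℝ) < t ^ α := rpow_pos_of_pos ht0 _
      rw [Real.norm_of_nonneg (by positivity), Real.norm_of_nonneg (by positivity)]
      have hts : t ^ (1 - α) = t / t ^ α := by
        rw [Real.rpow_sub ht0, Real.rpow_one]
      rw [hts, ← mul_div_assoc, div_le_div_iff₀ (by positivity) hu]
      nlinarith [mul_pos ht0 hu, sq_nonneg (t ^ α)]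
  · -- the value
    set g : ℝ → ℝ := fun y => (1/α) * (y ^ (s - 1) * ((1 + 2*y) / (1 + y) ^ 2)) with hg
    have step1 : (∫ t in Set.Ioi (0 : ℝ), t * (1 + 2 * t ^ α) / (1 + t ^ α) ^ 2)
        = ∫ x in Set.Ioi (0:ℝ), (|α| * x ^ (α - 1)) • g (x ^ α) := by
      refine setIntegral_congr_fun measurableSet_Ioi (fun x hx => ?_)
      have hx0 : (0:ℝ) < x := hx
      have hpow : (x ^ α) ^ (s - 1) = x ^ (2 - α) := by
        rw [← Real.rpow_mul hx0.le]
        congr 1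
        rw [hs]; field_simp
      have hx1 : x ^ (α - 1) * x ^ (2 - α) = x := by
        rw [← Real.rpow_add hx0]; norm_num
      show x * (1 + 2 * x ^ α) / (1 + x ^ α) ^ 2
        = (|α| * x ^ (α - 1)) • ((1/α) * ((x ^ α) ^ (s - 1) * ((1 + 2*(x ^ α)) / (1 + x ^ α) ^ 2)))
      rw [smul_eq_mul, abs_of_pos hα0, hpow]
      calc x * (1 + 2 * x ^ α) / (1 + x ^ α) ^ 2
          = x * ((1 + 2 * x ^ α) / (1 + x ^ α) ^ 2) := by rw [mul_div_assoc]
        _ = (α * (1/α)) * ((x ^ (α - 1) * x ^ (2 - α)) * ((1 + 2 * x ^ α) / (1 + x ^ α) ^ 2)) := by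
            rw [hx1, mul_one_div, div_self hαne, one_mul]
        _ = α * x ^ (α - 1) * ((1/α) * (x ^ (2 - α) * ((1 + 2 * x ^ α) / (1 + x ^ α) ^ 2))) := by
            ring
    have step2 : (∫ x in Set.Ioi (0:ℝ), (|α| * x ^ (α - 1)) • g (x ^ α))
        = ∫ y in Set.Ioi (0:ℝ), g y := integral_comp_rpow_Ioi g hαne
    have step3 : (∫ y in Set.Ioi (0:ℝ), g y)
        = (1/α) * ∫ y in Set.Ioi (0:ℝ), y ^ (s - 1) * ((1 + 2*y) / (1 + y) ^ 2) := by
      rw [hg, MeasureTheory.integral_const_mul]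
    have hsplit : ∀ y ∈ Set.Ioi (0:ℝ), y ^ (s - 1) * ((1 + 2*y) / (1 + y) ^ 2)
        = 2 * (y ^ (s - 1) * (1 + y) ^ (-(1:ℝ))) - y ^ (s - 1) * (1 + y) ^ (-(2:ℝ)) := by
      intro y hy
      have hy0 : (0:ℝ) < y := hy
      have hy1 : (0:ℝ) < 1 + y := by linarith
      have e1 : (1 + y) ^ (-(1:ℝ)) = (1 + y)⁻¹ := by
        rw [Real.rpow_neg_one]
      have e2 : (1 + y) ^ (-(2:ℝ)) = ((1 + y) ^ (2:ℕ))⁻¹ := by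
        rw [← Real.rpow_natCast (1+y) 2, ← Real.rpow_neg hy1.le]
        norm_num
      rw [e1, e2]
      field_simp
      ring
    have hint1 : IntegrableOn (fun y : ℝ => y ^ (s - 1) * (1 + y) ^ (-(1:ℝ))) (Set.Ioi 0) :=
      beta_integrable hs0 hs1
    have hint2 : IntegrableOn (fun y : ℝ => y ^ (s - 1) * (1 + y) ^ (-(2:ℝ))) (Set.Ioi 0) :=
      beta_integrable hs0 (by linarith)
    have step4 : (∫ y in Set.Ioi (0:ℝ), y ^ (s - 1) * ((1 + 2*y) / (1 + y) ^ 2))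
        = 2 * (∫ y in Set.Ioi (0:ℝ), y ^ (s - 1) * (1 + y) ^ (-(1:ℝ)))
          - ∫ y in Set.Ioi (0:ℝ), y ^ (s - 1) * (1 + y) ^ (-(2:ℝ)) := by
      rw [setIntegral_congr_fun measurableSet_Ioi hsplit,
        MeasureTheory.integral_sub ((hint1.const_mul 2)) hint2,
        MeasureTheory.integral_const_mul]
    have hb1 : (∫ y in Set.Ioi (0:ℝ), y ^ (s - 1) * (1 + y) ^ (-(1:ℝ)))
        = Gamma s * Gamma (1 - s) := by
      rw [beta_value hs0 hs1, Real.Gamma_one, div_one]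
    have hb2 : (∫ y in Set.Ioi (0:ℝ), y ^ (s - 1) * (1 + y) ^ (-(2:ℝ)))
        = Gamma s * ((1 - s) * Gamma (1 - s)) := by
      rw [beta_value hs0 (by linarith)]
      have hΓ2 : Gamma (2:ℝ) = 1 := by
        rw [show (2:ℝ) = 1 + 1 by norm_num, Real.Gamma_add_one one_ne_zero, Real.Gamma_one,
          mul_one]
      have hΓ2s : Gamma (2 - s) = (1 - s) * Gamma (1 - s) := by
        rw [show (2:ℝ) - s = (1 - s) + 1 by ring, Real.Gamma_add_one (by linarith)]
      rw [hΓ2, hΓ2s, div_one]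
    rw [step1, step2, step3, step4, hb1, hb2, hs]
    ring
end

section
/- Let r and d be nonzero vectors in ℝ² and let θ ∈ [0, π] be the angle between them, i.e. cos θ = ⟨r, d⟩/(‖r‖·‖d‖). Then ‖r − d‖ ≤ |‖d‖ − ‖r‖| + 2·min(‖d‖, ‖r‖)·sin(θ/2). -/
open Real RealInnerProductSpace

theorem stmt_5 (r d : EuclideanSpace ℝ (Fin 2)) (hr : r ≠ 0) (hd : d ≠ 0)
    (θ : ℝ) (hθ : θ ∈ Set.Icc 0 π)
    (hcos : cos θ = ⟪r, d⟫ / (‖r‖ * ‖d‖)) :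
    ‖r - d‖ ≤ |‖d‖ - ‖r‖| + 2 * min ‖d‖ ‖r‖ * sin (θ / 2) := by
  obtain ⟨h0, h1⟩ := hθ
  have ha : (0:ℝ) < ‖r‖ := norm_pos_iff.mpr hr
  have hb : (0:ℝ) < ‖d‖ := norm_pos_iff.mpr hd
  have hne : ‖r‖ * ‖d‖ ≠ 0 := by positivity
  have hip : ⟪r, d⟫ = ‖r‖ * ‖d‖ * cos θ := by
    rw [hcos, mul_comm, div_mul_cancel₀ _ hne]
  have hn2 : ‖r - d‖ ^ 2 = ‖r‖ ^ 2 - 2 * ⟪r, d⟫ + ‖d‖ ^ 2 := by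
    rw [@norm_sub_sq_real]
  have hcos2 : cos θ = 1 - 2 * sin (θ / 2) ^ 2 := by
    have h3 : cos (2 * (θ/2)) = 2 * cos (θ/2) ^ 2 - 1 := Real.cos_two_mul (θ/2)
    have h4 : 2 * (θ/2) = θ := by ring
    rw [h4] at h3
    nlinarith [Real.sin_sq_add_cos_sq (θ/2)]
  set s := sin (θ/2) with hs
  have hs0 : 0 ≤ s := Real.sin_nonneg_of_nonneg_of_le_pi (by linarith) (by linarith [Real.pi_pos])
  have hs1 : s ≤ 1 := Real.sin_le_one _
  have key : ‖r - d‖ ^ 2 = (‖d‖ - ‖r‖) ^ 2 + 4 * ‖r‖ * ‖d‖ * s ^ 2 := by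
    rw [hn2, hip, hcos2]; ring
  have hnn : 0 ≤ ‖r - d‖ := norm_nonneg _
  rcases le_total ‖r‖ ‖d‖ with h | h
  · rw [abs_of_nonneg (by linarith), min_eq_right h]
    have hfact : 0 ≤ 4 * ‖r‖ * (‖d‖ - ‖r‖) * s * (1 - s) := by 
      have := sub_nonneg.mpr h
      have := sub_nonneg.mpr hs1
      positivity
    have hrhs : 0 ≤ (‖d‖ - ‖r‖) + 2 * ‖r‖ * s := by nlinarith [mul_nonneg ha.le hs0]
    nlinarith [key, hfact, hrhs, hnn]
  · rw [abs_of_nonpos (by linarith), min_eq_left h]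
    have hfact : 0 ≤ 4 * ‖d‖ * (‖r‖ - ‖d‖) * s * (1 - s) := by 
      have := sub_nonneg.mpr h
      have := sub_nonneg.mpr hs1
      positivity
    have hrhs : 0 ≤ -(‖d‖ - ‖r‖) + 2 * ‖d‖ * s := by nlinarith [mul_nonneg hb.le hs0]
    nlinarith [key, hfact, hrhs, hnn]
end

section
/- Let α ≥ 2 be a real number and let u > 0 with u ≠ 1. Then (1 − u²)/(1 − u^α) ≥ 1 + (2/α − 1)·u. -/
open Real Set

lemma key_amgm (α x : ℝ) (hα : 2 ≤ α) (hx : 0 < x) :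
    (α - 1) * x ^ (α - 2) ≤ (α - 2) * x ^ (α - 1) + 1 := by
  rcases eq_or_lt_of_le hα with h | h
  · subst h
    norm_num [Real.rpow_zero]
  · have h1 : (0:ℝ) < α - 1 := by linarith
    have hw := Real.geom_mean_le_arith_mean2_weighted
      (w₁ := (α - 2) / (α - 1)) (w₂ := 1 / (α - 1))
      (p₁ := x ^ (α - 1)) (p₂ := 1)
      (div_nonneg (by linarith) (by linarith)) (by positivity)
      (Real.rpow_nonneg hx.le _) zero_le_one
      (by field_simp; ring)
    rw [Real.one_rpow, mul_one, ← Real.rpow_mul hx.le] at hw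
    have hexp : (α - 1) * ((α - 2) / (α - 1)) = α - 2 := by field_simp
    rw [hexp] at hw
    have h2 := mul_le_mul_of_nonneg_left hw h1.le
    calc (α - 1) * x ^ (α - 2)
        ≤ (α - 1) * ((α - 2) / (α - 1) * x ^ (α - 1) + 1 / (α - 1) * 1) := h2
      _ = (α - 2) * x ^ (α - 1) + 1 := by field_simp

lemma fmono (α : ℝ) (hα : 2 ≤ α) :
    MonotoneOn (fun x : ℝ => α * x + (α - 2) * x ^ α - α * x ^ (α - 1)) (Set.Ici 0) := by
  have hα1 : (1:ℝ) ≤ α - 1 := by linarith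
  apply monotoneOn_of_deriv_nonneg (convex_Ici 0)
  · apply ContinuousOn.sub
    · apply ContinuousOn.add
      · exact (continuous_const.mul continuous_id).continuousOn
      · exact continuousOn_const.mul
          (fun x _ => (Real.continuousAt_rpow_const x α (Or.inr (by linarith))).continuousWithinAt)
    · exact continuousOn_const.mul
        (fun x _ => (Real.continuousAt_rpow_const x (α - 1) (Or.inr (by linarith))).continuousWithinAt)
  · intro x hx
    rw [interior_Ici] at hx
    have hx0 : x ≠ 0 := ne_of_gt hx
    exact (((hasDerivAt_id x).const_mul α).add
      ((Real.hasDerivAt_rpow_const (Or.inl hx0)).const_mul (α - 2))).sub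
      ((Real.hasDerivAt_rpow_const (Or.inl hx0)).const_mul α) |>.differentiableAt.differentiableWithinAt
  · intro x hx
    rw [interior_Ici] at hx
    have hx0 : x ≠ 0 := ne_of_gt hx
    have hd : HasDerivAt (fun x : ℝ => α * x + (α - 2) * x ^ α - α * x ^ (α - 1))
        (α * 1 + (α - 2) * (α * x ^ (α - 1)) - α * ((α - 1) * x ^ (α - 1 - 1))) x :=
      (((hasDerivAt_id x).const_mul α).add
        ((Real.hasDerivAt_rpow_const (Or.inl hx0)).const_mul (α - 2))).sub
        ((Real.hasDerivAt_rpow_const (Or.inl hx0)).const_mul α)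
    rw [hd.deriv]
    have hkey := key_amgm α x hα hx
    have he : α - 1 - 1 = α - 2 := by ring
    rw [he]
    have hr : (0:ℝ) ≤ x ^ (α - 1) := Real.rpow_nonneg hx.le _
    nlinarith [hkey, hα]

theorem stmt_6 (α u : ℝ) (hα : 2 ≤ α) (hu : 0 < u) (hu1 : u ≠ 1) :
    1 + (2 / α - 1) * u ≤ (1 - u ^ 2) / (1 - u ^ α) := by
  have hα0 : (0:ℝ) < α := by linarith
  have hsub : u ^ α = u ^ (α - 1) * u := by
    rw [← Real.rpow_add_one (ne_of_gt hu) (α - 1), sub_add_cancel]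
  have expand : α * ((1 + (2 / α - 1) * u) * (1 - u ^ α))
      = (α + (2 - α) * u) * (1 - u ^ α) := by field_simp
  rcases lt_or_gt_of_ne hu1 with hlt | hgt
  · -- u < 1
    have hm := fmono α hα (mem_Ici.mpr hu.le) (mem_Ici.mpr zero_le_one) hlt.le
    simp only [Real.one_rpow, mul_one] at hm
    have hAlt : u ^ α < 1 := Real.rpow_lt_one hu.le hlt hα0
    rw [le_div_iff₀ (by linarith)]
    have hmul := mul_le_mul_of_nonneg_right hm hu.le
    have key : α * ((1 + (2 / α - 1) * u) * (1 - u ^ α)) ≤ α * (1 - u ^ 2) := by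
      rw [expand]; nlinarith [hmul, hsub]
    exact le_of_mul_le_mul_left key hα0
  · -- u > 1
    have hm := fmono α hα (mem_Ici.mpr zero_le_one) (mem_Ici.mpr hu.le) hgt.le
    simp only [Real.one_rpow, mul_one] at hm
    have hAgt : 1 < u ^ α := (Real.one_lt_rpow_iff_of_pos hu).mpr (Or.inl ⟨hgt, hα0⟩)
    rw [le_div_iff_of_neg (by linarith)]
    have hmul := mul_le_mul_of_nonneg_right hm hu.le
    have key : α * (1 - u ^ 2) ≤ α * ((1 + (2 / α - 1) * u) * (1 - u ^ α)) := by
      rw [expand]; nlinarith [hmul, hsub]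
    exact le_of_mul_le_mul_left key hα0
end

section
/- Let σ > 0 and d ∈ ℝ² with D = ‖d‖. Define I₀(z) = (1/π)·∫₀^π e^{z·cos t} dt. Then ∫_{ℝ²} ‖x − d‖ · (1/(2πσ²)) · e^{−‖x‖²/(2σ²)} dx = ∫₀^∞ (u²/σ²) · e^{−(u² + D²)/(2σ²)} · I₀(D·u/σ²) du. -/
open MeasureTheory Real

/-- Modified Bessel function of the first kind of order 0 (integral representation). -/
noncomputable def besselI0 (z : ℝ) : ℝ := (1 / π) * ∫ t in (0:ℝ)..π, exp (z * cos t)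

lemma ang_int (a : ℝ) :
    (∫ θ in Set.Ioo (-π) π, Real.exp (-(a * Real.cos θ))) = (2 * π) * besselI0 a := by
  have hci : ∀ x y : ℝ, IntervalIntegrable (fun θ => Real.exp (-(a * Real.cos θ))) volume x y :=
    fun x y => (by continuity : Continuous fun θ : ℝ => Real.exp (-(a * Real.cos θ))).intervalIntegrable x y
  have hπ : (-π : ℝ) ≤ π := by linarith [pi_pos]
  rw [← MeasureTheory.integral_Ioc_eq_integral_Ioo, ← intervalIntegral.integral_of_le hπ]
  have h1 : (∫ θ in (-π)..(0:ℝ), Real.exp (-(a * Real.cos θ)))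
      = ∫ θ in (0:ℝ)..π, Real.exp (-(a * Real.cos θ)) := by
    have := intervalIntegral.integral_comp_neg (a := 0) (b := π)
      (fun θ => Real.exp (-(a * Real.cos θ)))
    simp only [Real.cos_neg, neg_zero] at this
    rw [← this]
  have h2 : (∫ θ in (0:ℝ)..π, Real.exp (-(a * Real.cos θ)))
      = ∫ θ in (0:ℝ)..π, Real.exp (a * Real.cos θ) := by
    have := intervalIntegral.integral_comp_sub_left (a := 0) (b := π)
      (fun θ => Real.exp (a * Real.cos θ)) π
    simp only [Real.cos_pi_sub, sub_self, sub_zero, mul_neg] at this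
    rw [← this]
  rw [← intervalIntegral.integral_add_adjacent_intervals (hci (-π) 0) (hci 0 π), h1, h2,
    besselI0]
  have : (π : ℝ) ≠ 0 := pi_ne_zero
  field_simp
  ring


lemma norm_sq_aux (r θ Dv : ℝ) :
    ‖((r : ℂ) * (Real.cos θ + Real.sin θ * Complex.I) + (Dv:ℂ))‖ ^ 2
      = r ^ 2 + Dv ^ 2 + 2 * r * Dv * Real.cos θ := by
  rw [Complex.sq_norm, Complex.normSq_apply]
  simp only [Complex.add_re, Complex.add_im, Complex.mul_re, Complex.mul_im,
    Complex.ofReal_re, Complex.ofReal_im, Complex.I_re, Complex.I_im,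
    Complex.mul_re, Complex.mul_im]
  ring_nf
  nlinarith [Real.sin_sq_add_cos_sq θ]

lemma complex_main (σ : ℝ) (hσ : 0 < σ) (D : ℝ) (hD : 0 ≤ D) :
    (∫ z : ℂ, ‖z‖ * (1 / (2 * π * σ ^ 2)) * Real.exp (-‖z + (D:ℂ)‖ ^ 2 / (2 * σ ^ 2))) =
    ∫ u in Set.Ioi (0 : ℝ),
        (u ^ 2 / σ ^ 2) * Real.exp (-(u ^ 2 + D ^ 2) / (2 * σ ^ 2)) * besselI0 (D * u / σ ^ 2) := by
  have hσ2 : (0:ℝ) < σ ^ 2 := by positivity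
  have hπ : (0:ℝ) < π := pi_pos
  set C : ℝ := 1 / (2 * π * σ ^ 2) with hC
  have hCpos : 0 < C := by positivity
  set G : ℝ × ℝ → ℝ := fun p =>
    p.1 * (p.1 * C * Real.exp (-(p.1 ^ 2 + D ^ 2 + 2 * p.1 * D * Real.cos p.2) / (2 * σ ^ 2)))
    with hG
  have hGmeas : AEStronglyMeasurable G (volume.restrict (Set.Ioi (0:ℝ) ×ˢ Set.Ioo (-π) π)) := by
    apply Continuous.aestronglyMeasurable
    fun_prop
  have hGint : IntegrableOn G (Set.Ioi (0:ℝ) ×ˢ Set.Ioo (-π) π) volume := by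
    have hb : (0:ℝ) < 1 / (4 * σ ^ 2) := by positivity
    set g : ℝ × ℝ → ℝ := fun p =>
      (C * Real.exp (D ^ 2 / σ ^ 2)) * (p.1 ^ 2 * Real.exp (-(1 / (4 * σ ^ 2)) * p.1 ^ 2))
      with hg
    have hgint : IntegrableOn g (Set.Ioi (0:ℝ) ×ˢ Set.Ioo (-π) π) volume := by
      have h1 : IntegrableOn (fun r : ℝ => r ^ 2 * Real.exp (-(1 / (4 * σ ^ 2)) * r ^ 2))
          (Set.Ioi (0:ℝ)) volume := by
        have h0 := integrableOn_rpow_mul_exp_neg_mul_sq hb (s := 2) (by norm_num)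
        apply h0.congr_fun ?_ measurableSet_Ioi
        intro x hx
        have : x ^ (2:ℝ) = x ^ (2:ℕ) := by
          rw [show (2:ℝ) = ((2:ℕ):ℝ) by norm_num, Real.rpow_natCast]
        simp [this]
      rw [IntegrableOn, Measure.volume_eq_prod, ← Measure.prod_restrict]
      have h2 := Integrable.mul_prod (μ := volume.restrict (Set.Ioi (0:ℝ)))
        (ν := volume.restrict (Set.Ioo (-π) π)) h1 (integrable_const (1:ℝ))
      apply (h2.const_mul (C * Real.exp (D ^ 2 / σ ^ 2))).congr
      filter_upwards with p
      simp only [hg]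
      ring
    apply Integrable.mono' hgint hGmeas
    filter_upwards [ae_restrict_mem (measurableSet_Ioi.prod measurableSet_Ioo)] with p hp
    obtain ⟨hp1, hp2⟩ := hp
    have hr : (0:ℝ) < p.1 := hp1
    have hcos : -1 ≤ Real.cos p.2 := neg_one_le_cos p.2
    have hGpos : 0 ≤ G p := by
      apply mul_nonneg hr.le
      positivity
    rw [Real.norm_of_nonneg hGpos]
    have h2 : -(2 * p.1 * D) ≤ 2 * p.1 * D * Real.cos p.2 := by
      nlinarith [mul_nonneg (mul_nonneg (by linarith : (0:ℝ) ≤ 2 * p.1) hD)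
        (by linarith : (0:ℝ) ≤ Real.cos p.2 + 1)]
    have hq : (0:ℝ) ≤ p.1 ^ 2 / 2 + 2 * p.1 * D * Real.cos p.2 + 3 * D ^ 2 := by
      nlinarith [sq_nonneg (p.1 - 2 * D)]
    have hE : D ^ 2 / σ ^ 2 + -(1 / (4 * σ ^ 2)) * p.1 ^ 2
        = (4 * D ^ 2 - p.1 ^ 2) / (4 * σ ^ 2) := by
      field_simp
      ring
    have hexp : Real.exp (-(p.1 ^ 2 + D ^ 2 + 2 * p.1 * D * Real.cos p.2) / (2 * σ ^ 2))
        ≤ Real.exp (D ^ 2 / σ ^ 2) * Real.exp (-(1 / (4 * σ ^ 2)) * p.1 ^ 2) := by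
      rw [← Real.exp_add, Real.exp_le_exp, hE,
        div_le_div_iff₀ (by positivity) (by positivity)]
      nlinarith [mul_nonneg hσ2.le hq]
    calc G p
        ≤ p.1 * (p.1 * C * (Real.exp (D ^ 2 / σ ^ 2) * Real.exp (-(1 / (4 * σ ^ 2)) * p.1 ^ 2))) := by
          apply mul_le_mul_of_nonneg_left _ hr.le
          apply mul_le_mul_of_nonneg_left hexp (by positivity)
      _ = g p := by simp only [hg]; ring
  -- polar coordinates
  rw [← Complex.integral_comp_polarCoord_symm
    (fun z : ℂ => ‖z‖ * C * Real.exp (-‖z + (D:ℂ)‖ ^ 2 / (2 * σ ^ 2)))]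
  rw [show polarCoord.target = Set.Ioi (0:ℝ) ×ˢ Set.Ioo (-π) π from rfl]
  have hstep : (∫ p in Set.Ioi (0:ℝ) ×ˢ Set.Ioo (-π) π,
      p.1 • (‖Complex.polarCoord.symm p‖ * C
        * Real.exp (-‖Complex.polarCoord.symm p + (D:ℂ)‖ ^ 2 / (2 * σ ^ 2))))
      = ∫ p in Set.Ioi (0:ℝ) ×ˢ Set.Ioo (-π) π, G p := by
    apply setIntegral_congr_fun (measurableSet_Ioi.prod measurableSet_Ioo)
    intro p hp
    obtain ⟨hp1, -⟩ := hp
    simp only [Complex.polarCoord_symm_apply, smul_eq_mul, hG]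
    rw [norm_sq_aux p.1 p.2 D]
    have hnorm : ‖(p.1 : ℂ) * (Real.cos p.2 + Real.sin p.2 * Complex.I)‖ = p.1 := by
      have h := Complex.norm_polarCoord_symm p
      rw [Complex.polarCoord_symm_apply] at h
      rw [h, abs_of_pos hp1]
    rw [hnorm]
  rw [hstep]
  rw [Measure.volume_eq_prod, setIntegral_prod _ (by rwa [Measure.volume_eq_prod] at hGint)]
  apply setIntegral_congr_fun measurableSet_Ioi
  intro r hr
  show (∫ θ in Set.Ioo (-π) π, G (r, θ))
    = r ^ 2 / σ ^ 2 * Real.exp (-(r ^ 2 + D ^ 2) / (2 * σ ^ 2)) * besselI0 (D * r / σ ^ 2)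
  have hinner : (∫ θ in Set.Ioo (-π) π, G (r, θ))
      = (r * (r * C * Real.exp (-(r ^ 2 + D ^ 2) / (2 * σ ^ 2)))) *
        ∫ θ in Set.Ioo (-π) π, Real.exp (-((D * r / σ ^ 2) * Real.cos θ)) := by
    rw [← integral_const_mul]
    apply setIntegral_congr_fun measurableSet_Ioo
    intro θ _
    simp only [hG]
    rw [show -(r ^ 2 + D ^ 2 + 2 * r * D * Real.cos θ) / (2 * σ ^ 2)
        = -(r ^ 2 + D ^ 2) / (2 * σ ^ 2) + -(D * r / σ ^ 2 * Real.cos θ) by field_simp; ring,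
      Real.exp_add]
    ring
  rw [hinner, ang_int (D * r / σ ^ 2)]
  rw [hC, besselI0]
  field_simp

theorem stmt_8 (σ : ℝ) (hσ : 0 < σ) (d : EuclideanSpace ℝ (Fin 2)) (D : ℝ) (hD : D = ‖d‖) :
    (∫ x : EuclideanSpace ℝ (Fin 2),
        ‖x - d‖ * (1 / (2 * π * σ ^ 2)) * exp (-‖x‖ ^ 2 / (2 * σ ^ 2))) =
    ∫ u in Set.Ioi (0 : ℝ),
        (u ^ 2 / σ ^ 2) * exp (-(u ^ 2 + D ^ 2) / (2 * σ ^ 2)) * besselI0 (D * u / σ ^ 2) := by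
  set e := Complex.orthonormalBasisOneI.repr with he
  set c : ℂ := e.symm d with hc
  have hcD : ‖c‖ = D := by rw [hc, hD]; exact e.symm.norm_map d
  have hD0 : 0 ≤ D := hcD ▸ norm_nonneg c
  -- Step A: transfer to ℂ
  have stepA : (∫ x : EuclideanSpace ℝ (Fin 2),
      ‖x - d‖ * (1 / (2 * π * σ ^ 2)) * exp (-‖x‖ ^ 2 / (2 * σ ^ 2)))
      = ∫ z : ℂ, ‖z - c‖ * (1 / (2 * π * σ ^ 2)) * exp (-‖z‖ ^ 2 / (2 * σ ^ 2)) := by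
    rw [← Complex.orthonormalBasisOneI.measurePreserving_repr.integral_comp
      Complex.orthonormalBasisOneI.measurableEquiv.measurableEmbedding
      (fun x : EuclideanSpace ℝ (Fin 2) => ‖x - d‖ * (1 / (2 * π * σ ^ 2)) * exp (-‖x‖ ^ 2 / (2 * σ ^ 2)))]
    congr 1
    funext z
    have h1 : ‖e z - d‖ = ‖z - c‖ := by
      rw [hc, show e z - d = e (z - e.symm d) by simp [map_sub], e.norm_map]
    have h2 : ‖e z‖ = ‖z‖ := e.norm_map z
    rw [← he] at *
    rw [h1, h2]
  -- Step B: translation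
  have stepB : (∫ z : ℂ, ‖z - c‖ * (1 / (2 * π * σ ^ 2)) * exp (-‖z‖ ^ 2 / (2 * σ ^ 2)))
      = ∫ z : ℂ, ‖z‖ * (1 / (2 * π * σ ^ 2)) * exp (-‖z + c‖ ^ 2 / (2 * σ ^ 2)) := by
    rw [← integral_add_right_eq_self
      (fun z : ℂ => ‖z - c‖ * (1 / (2 * π * σ ^ 2)) * exp (-‖z‖ ^ 2 / (2 * σ ^ 2))) c]
    congr 1
    funext z
    rw [add_sub_cancel_right]
  -- Step C: rotation
  obtain ⟨a, ha⟩ : ∃ a : Circle, (a : ℂ) * (D : ℂ) = c := by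
    rcases eq_or_ne c 0 with h0 | h0
    · refine ⟨1, ?_⟩
      have : D = 0 := by rw [← hcD, h0, norm_zero]
      simp [h0, this]
    · have hDpos : 0 < D := by
        rw [← hcD]; exact norm_pos_iff.mpr h0
      refine ⟨⟨c / (D : ℂ), ?_⟩, ?_⟩
      · show c / (D:ℂ) ∈ Metric.sphere (0:ℂ) 1
        rw [mem_sphere_zero_iff_norm, norm_div, hcD, Complex.norm_real,
          Real.norm_of_nonneg hD0, div_self hDpos.ne']
      · exact div_mul_cancel₀ c (by exact_mod_cast hDpos.ne')
  have stepC : (∫ z : ℂ, ‖z‖ * (1 / (2 * π * σ ^ 2)) * exp (-‖z + c‖ ^ 2 / (2 * σ ^ 2)))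
      = ∫ z : ℂ, ‖z‖ * (1 / (2 * π * σ ^ 2)) * exp (-‖z + (D:ℂ)‖ ^ 2 / (2 * σ ^ 2)) := by
    rw [← (rotation a).measurePreserving.integral_comp
      (rotation a).toHomeomorph.measurableEmbedding
      (fun z : ℂ => ‖z‖ * (1 / (2 * π * σ ^ 2)) * exp (-‖z + c‖ ^ 2 / (2 * σ ^ 2)))]
    congr 1
    funext z
    have h1 : ‖rotation a z‖ = ‖z‖ := (rotation a).norm_map z
    have h2 : ‖rotation a z + c‖ = ‖z + (D:ℂ)‖ := by
      rw [rotation_apply, ← ha, ← mul_add, norm_mul, Circle.norm_coe, one_mul]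
    rw [h1, h2]
  rw [stepA, stepB, stepC, complex_main σ hσ D hD0]
end

section
/- Let σ > 0 and d ∈ ℝ² with D = ‖d‖ and s = D/σ. Define I₀(z) = (1/π)·∫₀^π e^{z·cos t} dt and I₁(z) = (1/π)·∫₀^π e^{z·cos t}·cos t dt. Then ∫_{ℝ²} ‖x − d‖ · (1/(2πσ²)) · e^{−‖x‖²/(2σ²)} dx = σ·√(π/8)·e^{−s²/4}·[(s² + 2)·I₀(s²/4) + s²·I₁(s²/4)]. -/
open MeasureTheory Real Set Filter Asymptotics Topology

/-- Modified Bessel function of the first kind of order 1 (integral representation). -/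
noncomputable def besselI1 (z : ℝ) : ℝ := (1 / π) * ∫ t in (0:ℝ)..π, exp (z * cos t) * cos t

lemma tendsto_mul_exp_neg_sq {b : ℝ} (hb : 0 < b) :
    Tendsto (fun x : ℝ => x * exp (-b * x ^ 2)) atTop (𝓝 0) := by
  have h := rpow_mul_exp_neg_mul_sq_isLittleO_exp_neg hb 1
  simp only [rpow_one] at h
  have h2 : Tendsto (fun x : ℝ => exp (-(1/2) * x)) atTop (𝓝 0) := by
    have h3 : Tendsto (fun x : ℝ => -(1/2) * x) atTop atBot := by
      simpa [Function.comp_def, neg_mul] using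
        (tendsto_neg_atTop_atBot.comp (tendsto_id.const_mul_atTop (by norm_num : (0:ℝ) < 1/2)))
    simpa [Function.comp_def] using tendsto_exp_atBot.comp h3
  exact h.isBigO.trans_tendsto h2

lemma tendsto_exp_neg_sq {b : ℝ} (hb : 0 < b) :
    Tendsto (fun x : ℝ => exp (-b * x ^ 2)) atTop (𝓝 0) := by
  have h3 : Tendsto (fun x : ℝ => -b * x ^ 2) atTop atBot := by
    simpa [Function.comp_def, neg_mul] using
      (tendsto_neg_atTop_atBot.comp ((tendsto_pow_atTop two_ne_zero).const_mul_atTop hb))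
  simpa [Function.comp_def] using tendsto_exp_atBot.comp h3

lemma integrable_sq_mul_exp_neg_sq {b : ℝ} (hb : 0 < b) :
    Integrable (fun x : ℝ => x ^ 2 * exp (-b * x ^ 2)) := by
  have := integrable_rpow_mul_exp_neg_mul_sq hb (s := 2) (by norm_num)
  simpa [Real.rpow_natCast] using this

lemma integral_mul_exp_neg_sq {b : ℝ} (hb : 0 < b) :
    ∫ x : ℝ, x * exp (-b * x ^ 2) = 0 := by
  have hderiv : ∀ x : ℝ, HasDerivAt (fun y : ℝ => -exp (-b * y ^ 2) / (2 * b))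
      (x * exp (-b * x ^ 2)) x := by
    intro x
    have h1 : HasDerivAt (fun y : ℝ => -b * y ^ 2) (-b * (2 * x)) x := by
      simpa using ((hasDerivAt_pow 2 x).const_mul (-b))
    have := ((h1.exp).neg.div_const (2 * b))
    refine this.congr_deriv ?_
    field_simp
  have hbot : Tendsto (fun y : ℝ => -exp (-b * y ^ 2) / (2 * b)) atBot (𝓝 0) := by
    have := ((tendsto_exp_neg_sq hb).comp tendsto_neg_atBot_atTop).neg.div_const (2 * b)
    simpa [Function.comp_def] using this
  have htop : Tendsto (fun y : ℝ => -exp (-b * y ^ 2) / (2 * b)) atTop (𝓝 0) := by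
    simpa using ((tendsto_exp_neg_sq hb).neg.div_const (2 * b))
  simpa using integral_of_hasDerivAt_of_tendsto hderiv (integrable_mul_exp_neg_mul_sq hb) hbot htop

lemma integral_sq_mul_exp_neg_sq {b : ℝ} (hb : 0 < b) :
    ∫ x : ℝ, x ^ 2 * exp (-b * x ^ 2) = Real.sqrt (π / b) / (2 * b) := by
  have hderiv : ∀ x : ℝ, HasDerivAt (fun y : ℝ => -(y * exp (-b * y ^ 2)) / (2 * b))
      (x ^ 2 * exp (-b * x ^ 2) - exp (-b * x ^ 2) / (2 * b)) x := by
    intro x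
    have h1 : HasDerivAt (fun y : ℝ => -b * y ^ 2) (-b * (2 * x)) x := by
      simpa using ((hasDerivAt_pow 2 x).const_mul (-b))
    have h2 := (hasDerivAt_id x).mul h1.exp
    have := (h2.neg.div_const (2 * b))
    refine this.congr_deriv ?_
    field_simp
    simp only [id_eq]; ring
  have hbot : Tendsto (fun y : ℝ => -(y * exp (-b * y ^ 2)) / (2 * b)) atBot (𝓝 0) := by
    have := ((tendsto_mul_exp_neg_sq hb).comp tendsto_neg_atBot_atTop).div_const (2 * b)
    simpa [Function.comp_def, neg_mul, neg_sq] using this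
  have htop : Tendsto (fun y : ℝ => -(y * exp (-b * y ^ 2)) / (2 * b)) atTop (𝓝 0) := by
    simpa using ((tendsto_mul_exp_neg_sq hb).neg.div_const (2 * b))
  have hint : Integrable (fun x : ℝ => x ^ 2 * exp (-b * x ^ 2) - exp (-b * x ^ 2) / (2 * b)) :=
    (integrable_sq_mul_exp_neg_sq hb).sub ((integrable_exp_neg_mul_sq hb).div_const (2 * b))
  have key := integral_of_hasDerivAt_of_tendsto hderiv hint hbot htop
  rw [integral_sub (integrable_sq_mul_exp_neg_sq hb)
    ((integrable_exp_neg_mul_sq hb).div_const (2 * b)), sub_zero, integral_div,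
    integral_gaussian] at key
  linarith [key]

lemma integrable_quad_gauss {b : ℝ} (hb : 0 < b) (m : ℝ) :
    Integrable (fun u : ℝ => (u + m) ^ 2 * exp (-b * u ^ 2)) := by
  have h : (fun u : ℝ => (u + m) ^ 2 * exp (-b * u ^ 2)) =
      (fun u : ℝ => u ^ 2 * exp (-b * u ^ 2) + (2 * m) * (u * exp (-b * u ^ 2))
        + m ^ 2 * exp (-b * u ^ 2)) := by
    funext u; ring
  rw [h]
  exact (((integrable_sq_mul_exp_neg_sq hb).add
    ((integrable_mul_exp_neg_mul_sq hb).const_mul (2 * m))).add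
    ((integrable_exp_neg_mul_sq hb).const_mul (m ^ 2)))

lemma sq_exp_quadratic_eq {b c : ℝ} (hb : 0 < b) (x : ℝ) :
    x ^ 2 * exp (-b * x ^ 2 + c * x)
      = exp (c ^ 2 / (4 * b)) * (((x - c / (2 * b)) + c / (2 * b)) ^ 2
          * exp (-b * (x - c / (2 * b)) ^ 2)) := by
  have hb' : b ≠ 0 := ne_of_gt hb
  have h1 : c ^ 2 / (4 * b) + -b * (x - c / (2 * b)) ^ 2 = -b * x ^ 2 + c * x := by
    field_simp; ring
  calc x ^ 2 * exp (-b * x ^ 2 + c * x)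
      = ((x - c / (2 * b)) + c / (2 * b)) ^ 2
          * exp (c ^ 2 / (4 * b) + -b * (x - c / (2 * b)) ^ 2) := by rw [h1]; ring_nf
    _ = _ := by rw [Real.exp_add]; ring

lemma integrable_sq_exp_quadratic {b : ℝ} (hb : 0 < b) (c : ℝ) :
    Integrable (fun x : ℝ => x ^ 2 * exp (-b * x ^ 2 + c * x)) := by
  have h := ((integrable_quad_gauss hb (c / (2 * b))).comp_sub_right (c / (2 * b))).const_mul
    (exp (c ^ 2 / (4 * b)))
  refine h.congr (Eventually.of_forall fun x => ?_)
  exact (sq_exp_quadratic_eq hb x).symm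

lemma integral_sq_exp_quadratic {b : ℝ} (hb : 0 < b) (c : ℝ) :
    ∫ x : ℝ, x ^ 2 * exp (-b * x ^ 2 + c * x)
      = Real.sqrt (π / b) * (1 / (2 * b) + c ^ 2 / (4 * b ^ 2)) * exp (c ^ 2 / (4 * b)) := by
  have h1 : ∫ x : ℝ, x ^ 2 * exp (-b * x ^ 2 + c * x)
      = exp (c ^ 2 / (4 * b)) * ∫ x : ℝ, ((x - c / (2 * b)) + c / (2 * b)) ^ 2
          * exp (-b * (x - c / (2 * b)) ^ 2) := by
    rw [← integral_const_mul]
    exact integral_congr_ae (Eventually.of_forall fun x => sq_exp_quadratic_eq hb x)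
  rw [h1, integral_sub_right_eq_self (fun u : ℝ => (u + c / (2 * b)) ^ 2 * exp (-b * u ^ 2))]
  have h2 : ∀ u : ℝ, (u + c / (2 * b)) ^ 2 * exp (-b * u ^ 2)
      = u ^ 2 * exp (-b * u ^ 2) + ((2 * (c / (2 * b))) * (u * exp (-b * u ^ 2))
        + (c / (2 * b)) ^ 2 * exp (-b * u ^ 2)) := by intro u; ring
  rw [integral_congr_ae (Eventually.of_forall h2)]
  have ia : Integrable (fun u : ℝ => (2 * (c / (2 * b))) * (u * exp (-b * u ^ 2))
      + (c / (2 * b)) ^ 2 * exp (-b * u ^ 2)) := by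
    exact ((integrable_mul_exp_neg_mul_sq hb).const_mul _).add
      ((integrable_exp_neg_mul_sq hb).const_mul _)
  rw [integral_add (integrable_sq_mul_exp_neg_sq hb) ia,
    integral_add ((integrable_mul_exp_neg_mul_sq hb).const_mul _)
      ((integrable_exp_neg_mul_sq hb).const_mul _),
    integral_const_mul, integral_const_mul, integral_mul_exp_neg_sq hb,
    integral_sq_mul_exp_neg_sq hb, integral_gaussian]
  have hb' : b ≠ 0 := ne_of_gt hb
  field_simp
  ring

lemma Ksum {b : ℝ} (hb : 0 < b) (c : ℝ) :
    (∫ r in Ioi (0:ℝ), r ^ 2 * exp (-b * r ^ 2 + c * r))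
      + (∫ r in Ioi (0:ℝ), r ^ 2 * exp (-b * r ^ 2 + (-c) * r))
    = Real.sqrt (π / b) * (1 / (2 * b) + c ^ 2 / (4 * b ^ 2)) * exp (c ^ 2 / (4 * b)) := by
  have hrefl : (∫ r in Ioi (0:ℝ), r ^ 2 * exp (-b * r ^ 2 + (-c) * r))
      = ∫ r in Iic (0:ℝ), r ^ 2 * exp (-b * r ^ 2 + c * r) := by
    have := integral_comp_neg_Ioi (0:ℝ) (fun r => r ^ 2 * exp (-b * r ^ 2 + c * r))
    rw [neg_zero] at this
    rw [← this]
    refine setIntegral_congr_fun measurableSet_Ioi fun x _ => ?_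
    ring_nf
  rw [hrefl, add_comm]
  have hint := integrable_sq_exp_quadratic hb c
  rw [← setIntegral_union (Iic_disjoint_Ioi le_rfl) measurableSet_Ioi
    hint.integrableOn hint.integrableOn, Iic_union_Ioi, setIntegral_univ]
  exact integral_sq_exp_quadratic hb c

set_option maxHeartbeats 1000000 in
theorem stmt_9 (σ : ℝ) (hσ : 0 < σ) (d : EuclideanSpace ℝ (Fin 2)) (D s : ℝ)
    (hD : D = ‖d‖) (hs : s = D / σ) :
    (∫ x : EuclideanSpace ℝ (Fin 2),
        ‖x - d‖ * (1 / (2 * π * σ ^ 2)) * exp (-‖x‖ ^ 2 / (2 * σ ^ 2))) =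
    σ * Real.sqrt (π / 8) * exp (-s ^ 2 / 4) *
      ((s ^ 2 + 2) * besselI0 (s ^ 2 / 4) + s ^ 2 * besselI1 (s ^ 2 / 4)) := by
  have hDnn : 0 ≤ D := hD ▸ norm_nonneg d
  have hDs : D = s * σ := by rw [hs]; field_simp
  set C : ℝ := 1 / (2 * π * σ ^ 2) with hC
  set d' : EuclideanSpace ℝ (Fin 2) := EuclideanSpace.single 0 D with hd'
  have hnorm : ‖d'‖ = ‖d‖ := by
    rw [hd', EuclideanSpace.norm_single, Real.norm_eq_abs, abs_of_nonneg hDnn, hD]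
  set T := Submodule.reflection (ℝ ∙ (d' - d))ᗮ with hTdef
  have hT : T d' = d := Submodule.reflection_sub hnorm
  -- Step 1: rotate `d` to `d' = (D, 0)`
  have step1 : (∫ x : EuclideanSpace ℝ (Fin 2), ‖x - d‖ * C * exp (-‖x‖ ^ 2 / (2 * σ ^ 2)))
      = ∫ x : EuclideanSpace ℝ (Fin 2), ‖x - d'‖ * C * exp (-‖x‖ ^ 2 / (2 * σ ^ 2)) := by
    rw [← T.measurePreserving.integral_comp T.toMeasurableEquiv.measurableEmbedding
      (fun x => ‖x - d‖ * C * exp (-‖x‖ ^ 2 / (2 * σ ^ 2)))]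
    congr 1
    funext y
    rw [← hT, ← map_sub, T.norm_map, T.norm_map]
  -- Step 2: translate by `d'`
  have step2 : (∫ x : EuclideanSpace ℝ (Fin 2), ‖x - d'‖ * C * exp (-‖x‖ ^ 2 / (2 * σ ^ 2)))
      = ∫ x : EuclideanSpace ℝ (Fin 2), ‖x‖ * C * exp (-‖x + d'‖ ^ 2 / (2 * σ ^ 2)) := by
    rw [← integral_add_right_eq_self
      (fun y => ‖y - d'‖ * C * exp (-‖y‖ ^ 2 / (2 * σ ^ 2))) d']
    congr 1; funext x
    simp [add_sub_cancel_right]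
  -- Step 3: move to `ℝ × ℝ`
  have step3 : (∫ x : EuclideanSpace ℝ (Fin 2), ‖x‖ * C * exp (-‖x + d'‖ ^ 2 / (2 * σ ^ 2)))
      = ∫ p : ℝ × ℝ, Real.sqrt (p.1 ^ 2 + p.2 ^ 2) * C
        * exp (-(p.1 ^ 2 + p.2 ^ 2 + 2 * D * p.1 + D ^ 2) / (2 * σ ^ 2)) := by
    have hmp := (volume_preserving_finTwoArrow ℝ).comp
      (EuclideanSpace.volume_preserving_symm_measurableEquiv_toLp (Fin 2))
    rw [← hmp.integral_comp ((MeasurableEquiv.toLp 2 (Fin 2 → ℝ)).symm.trans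
        MeasurableEquiv.finTwoArrow).measurableEmbedding
      (fun p : ℝ × ℝ => Real.sqrt (p.1 ^ 2 + p.2 ^ 2) * C
        * exp (-(p.1 ^ 2 + p.2 ^ 2 + 2 * D * p.1 + D ^ 2) / (2 * σ ^ 2)))]
    congr 1
    funext x
    have hcoord : (⇑MeasurableEquiv.finTwoArrow ∘ ⇑(MeasurableEquiv.toLp 2 (Fin 2 → ℝ)).symm) x
        = (x 0, x 1) := rfl
    rw [hcoord]
    have hnx : ‖x‖ = Real.sqrt ((x 0) ^ 2 + (x 1) ^ 2) := by
      rw [EuclideanSpace.norm_eq, Fin.sum_univ_two, Real.norm_eq_abs, Real.norm_eq_abs,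
        sq_abs, sq_abs]
    have hnxd : ‖x + d'‖ ^ 2 = (x 0) ^ 2 + (x 1) ^ 2 + 2 * D * (x 0) + D ^ 2 := by
      rw [EuclideanSpace.norm_eq, Fin.sum_univ_two, Real.sq_sqrt (by positivity)]
      have h0 : (x + d') 0 = x 0 + D := by
        simp [hd', EuclideanSpace.single_apply]
      have h1 : (x + d') 1 = x 1 := by
        simp [hd', EuclideanSpace.single_apply]
      rw [h0, h1, Real.norm_eq_abs, Real.norm_eq_abs, sq_abs, sq_abs]
      ring
    rw [hnx, hnxd]
  -- Step 4: polar coordinates and Fubini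
  set b : ℝ := 1 / (2 * σ ^ 2) with hbdef
  have hb : 0 < b := by positivity
  set F : ℝ × ℝ → ℝ :=
    fun z => z.1 ^ 2 * exp (-b * z.1 ^ 2 + (-(D * cos z.2) / σ ^ 2) * z.1) with hFdef
  set J : ℝ → ℝ := fun θ => ∫ r in Ioi (0:ℝ), F (r, θ) with hJdef
  have htarget : polarCoord.target = Ioi (0:ℝ) ×ˢ Ioo (-π) π := rfl
  have hF : Integrable F ((volume.restrict (Ioi (0:ℝ))).prod
      (volume.restrict (Ioo (-π) π))) := by
    have hg : Integrable (fun z : ℝ × ℝ =>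
        (z.1 ^ 2 * exp (-b * z.1 ^ 2 + (D / σ ^ 2) * z.1)) * (1:ℝ))
        ((volume.restrict (Ioi (0:ℝ))).prod (volume.restrict (Ioo (-π) π))) :=
      Integrable.mul_prod ((integrable_sq_exp_quadratic hb (D / σ ^ 2)).restrict)
        (integrable_const 1)
    have hFcont : Continuous F := by
      apply Continuous.mul (by fun_prop)
      apply Real.continuous_exp.comp
      fun_prop
    refine hg.mono' hFcont.aestronglyMeasurable ?_
    rw [Measure.prod_restrict]
    filter_upwards [ae_restrict_mem (measurableSet_Ioi.prod measurableSet_Ioo)] with z hz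
    obtain ⟨hz1, _⟩ := hz
    have hz1 : (0:ℝ) < z.1 := hz1
    rw [hFdef, mul_one]
    dsimp only
    rw [Real.norm_eq_abs, abs_mul, abs_of_nonneg (sq_nonneg z.1),
      abs_of_nonneg (Real.exp_pos _).le]
    apply mul_le_mul_of_nonneg_left _ (sq_nonneg z.1)
    apply Real.exp_le_exp.2
    apply add_le_add_right
    apply mul_le_mul_of_nonneg_right _ hz1.le
    rw [div_le_div_iff_of_pos_right (by positivity)]
    nlinarith [neg_one_le_cos z.2, cos_le_one z.2]
  have step4 : (∫ p : ℝ × ℝ, Real.sqrt (p.1 ^ 2 + p.2 ^ 2) * C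
        * exp (-(p.1 ^ 2 + p.2 ^ 2 + 2 * D * p.1 + D ^ 2) / (2 * σ ^ 2)))
      = (C * exp (-D ^ 2 / (2 * σ ^ 2))) * ∫ θ in Ioo (-π) π, J θ := by
    have hpolar := integral_comp_polarCoord_symm
      (fun p : ℝ × ℝ => Real.sqrt (p.1 ^ 2 + p.2 ^ 2) * C
        * exp (-(p.1 ^ 2 + p.2 ^ 2 + 2 * D * p.1 + D ^ 2) / (2 * σ ^ 2)))
    rw [← hpolar]
    have hcongr : ∀ p ∈ polarCoord.target,
        p.1 • (Real.sqrt ((polarCoord.symm p).1 ^ 2 + (polarCoord.symm p).2 ^ 2) * C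
          * exp (-((polarCoord.symm p).1 ^ 2 + (polarCoord.symm p).2 ^ 2
              + 2 * D * (polarCoord.symm p).1 + D ^ 2) / (2 * σ ^ 2)))
        = (C * exp (-D ^ 2 / (2 * σ ^ 2))) * F p := by
      rintro ⟨r, θ⟩ hp
      rw [htarget] at hp
      obtain ⟨hr, hθ⟩ := hp
      have hr : (0:ℝ) < r := hr
      have hsymm : polarCoord.symm (r, θ) = (r * cos θ, r * sin θ) := rfl
      rw [hsymm]
      dsimp only
      have hsq : (r * cos θ) ^ 2 + (r * sin θ) ^ 2 = r ^ 2 := by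
        have := cos_sq_add_sin_sq θ; nlinarith
      rw [hsq, Real.sqrt_sq hr.le]
      have hexp : -(r ^ 2 + 2 * D * (r * cos θ) + D ^ 2) / (2 * σ ^ 2)
          = (-b * r ^ 2 + (-(D * cos θ) / σ ^ 2) * r) + (-D ^ 2 / (2 * σ ^ 2)) := by
        rw [hbdef]; field_simp; ring
      rw [hexp, Real.exp_add, hFdef]
      simp only [smul_eq_mul]
      ring
    rw [setIntegral_congr_fun (by rw [htarget]; exact measurableSet_Ioi.prod measurableSet_Ioo)
      hcongr, integral_const_mul]
    congr 1
    have hvol : (volume : Measure (ℝ × ℝ)).restrict polarCoord.target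
        = (volume.restrict (Ioi (0:ℝ))).prod (volume.restrict (Ioo (-π) π)) := by
      rw [Measure.volume_eq_prod, Measure.prod_restrict, htarget]
    rw [hvol, integral_prod_symm F hF]
  -- Step 5: the angular integral
  have hJint : IntegrableOn J (Ioo (-π) π) := hF.integral_prod_right
  set M : ℝ → ℝ := fun θ => Real.sqrt (2 * π * σ ^ 2) * (σ ^ 2 + (D * cos θ) ^ 2)
    * exp ((D * cos θ) ^ 2 / (2 * σ ^ 2)) with hMdef
  have key : ∀ θ : ℝ, J θ + J (π - θ) = M θ := by
    intro θ
    have h1 : J θ = ∫ r in Ioi (0:ℝ),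
        r ^ 2 * exp (-b * r ^ 2 + (-(D * cos θ) / σ ^ 2) * r) := rfl
    have h2 : J (π - θ) = ∫ r in Ioi (0:ℝ),
        r ^ 2 * exp (-b * r ^ 2 + (-(-(D * cos θ) / σ ^ 2)) * r) := by
      rw [hJdef]
      refine setIntegral_congr_fun measurableSet_Ioi fun r _ => ?_
      rw [hFdef]
      dsimp only
      rw [cos_pi_sub]
      ring_nf
    rw [h1, h2, Ksum hb (-(D * cos θ) / σ ^ 2), hMdef]
    have hσ' : σ ≠ 0 := ne_of_gt hσ
    have e1 : π / b = 2 * π * σ ^ 2 := by rw [hbdef]; field_simp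
    have e2 : 1 / (2 * b) + (-(D * cos θ) / σ ^ 2) ^ 2 / (4 * b ^ 2)
        = σ ^ 2 + (D * cos θ) ^ 2 := by rw [hbdef]; field_simp; ring
    have e3 : (-(D * cos θ) / σ ^ 2) ^ 2 / (4 * b)
        = (D * cos θ) ^ 2 / (2 * σ ^ 2) := by rw [hbdef]; field_simp; ring
    rw [e1, e2, e3]
  have hppos : (0:ℝ) < π := pi_pos
  have hJ1 : IntervalIntegrable J volume (-π) 0 :=
    (intervalIntegrable_iff_integrableOn_Ioo_of_le (by linarith)).2
      (hJint.mono_set (Ioo_subset_Ioo_right (by linarith)))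
  have hJ2 : IntervalIntegrable J volume 0 π :=
    (intervalIntegrable_iff_integrableOn_Ioo_of_le (by linarith)).2
      (hJint.mono_set (Ioo_subset_Ioo_left (by linarith)))
  have step5 : (∫ θ in Ioo (-π) π, J θ) = ∫ θ in (0:ℝ)..π, M θ := by
    have h1 : (∫ θ in Ioo (-π) π, J θ) = ∫ θ in (-π)..π, J θ := by
      rw [intervalIntegral.integral_of_le (by linarith), integral_Ioc_eq_integral_Ioo]
    have h2 : (∫ θ in (-π)..π, J θ) = (∫ θ in (-π)..(0:ℝ), J θ) + ∫ θ in (0:ℝ)..π, J θ :=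
      (intervalIntegral.integral_add_adjacent_intervals hJ1 hJ2).symm
    have h3 : (∫ θ in (-π)..(0:ℝ), J θ) = ∫ θ in (0:ℝ)..π, J θ := by
      have hneg := intervalIntegral.integral_comp_neg (a := (0:ℝ)) (b := π) J
      rw [neg_zero] at hneg
      rw [← hneg]
      refine intervalIntegral.integral_congr fun θ _ => ?_
      rw [hJdef]
      refine setIntegral_congr_fun measurableSet_Ioi fun r _ => ?_
      rw [hFdef]
      dsimp only
      rw [cos_neg]
    have h4 : (∫ θ in (0:ℝ)..π, J (π - θ)) = ∫ θ in (0:ℝ)..π, J θ := by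
      have hsub := intervalIntegral.integral_comp_sub_left (a := (0:ℝ)) (b := π) J π
      rw [sub_zero, sub_self] at hsub
      rw [hsub]
    have hJ2' : IntervalIntegrable (fun θ => J (π - θ)) volume 0 π := by
      have := (hJ2.comp_sub_left π).symm
      rw [sub_zero, sub_self] at this
      exact this
    have h5 : (∫ θ in (0:ℝ)..π, J θ) + ∫ θ in (0:ℝ)..π, J (π - θ)
        = ∫ θ in (0:ℝ)..π, M θ := by
      rw [← intervalIntegral.integral_add hJ2 hJ2']
      exact intervalIntegral.integral_congr fun θ _ => key θ
    rw [h1, h2, h3]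
    linarith [h5, h4]
  -- Step 6: evaluate the angular integral via Bessel functions
  set z : ℝ := s ^ 2 / 4 with hz
  set N : ℝ → ℝ := fun u => exp (z * cos u) * ((σ ^ 2 + D ^ 2 / 2) + D ^ 2 / 2 * cos u)
    with hNdef
  have hπ : (π:ℝ) ≠ 0 := ne_of_gt hppos
  have hI0 : ∫ t in (0:ℝ)..π, exp (z * cos t) = π * besselI0 z := by
    rw [besselI0]; field_simp
  have hI1 : ∫ t in (0:ℝ)..π, exp (z * cos t) * cos t = π * besselI1 z := by
    rw [besselI1]; field_simp
  have hNcont : Continuous N := by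
    apply Continuous.mul
    · apply Real.continuous_exp.comp; fun_prop
    · fun_prop
  have hNval : ∫ u in (0:ℝ)..π, N u
      = (σ ^ 2 + D ^ 2 / 2) * (π * besselI0 z) + D ^ 2 / 2 * (π * besselI1 z) := by
    have hcongr : ∀ u ∈ uIcc (0:ℝ) π, N u
        = (σ ^ 2 + D ^ 2 / 2) * exp (z * cos u)
          + D ^ 2 / 2 * (exp (z * cos u) * cos u) := by
      intro u _; rw [hNdef]; ring
    rw [intervalIntegral.integral_congr hcongr, intervalIntegral.integral_add
        ((by fun_prop : Continuous fun u : ℝ => (σ ^ 2 + D ^ 2 / 2) * exp (z * cos u)).intervalIntegrable 0 π)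
        ((by fun_prop : Continuous fun u : ℝ => D ^ 2 / 2 * (exp (z * cos u) * cos u)).intervalIntegrable 0 π),
      intervalIntegral.integral_const_mul, intervalIntegral.integral_const_mul, hI0, hI1]
  have hdouble : ∫ u in (0:ℝ)..(2 * π), N u = 2 * ∫ u in (0:ℝ)..π, N u := by
    rw [← intervalIntegral.integral_add_adjacent_intervals
      (hNcont.intervalIntegrable 0 π) (hNcont.intervalIntegrable π (2 * π))]
    have heq : (∫ u in π..(2 * π), N u) = ∫ u in (0:ℝ)..π, N u := by
      have hsub := intervalIntegral.integral_comp_sub_left (a := (0:ℝ)) (b := π) N (2 * π)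
      rw [sub_zero, show 2 * π - π = π by ring] at hsub
      rw [← hsub]
      refine intervalIntegral.integral_congr fun u _ => ?_
      rw [hNdef]
      dsimp only
      rw [Real.cos_two_pi_sub]
    rw [heq]; ring
  have hN2 : ∀ θ : ℝ, M θ = Real.sqrt (2 * π * σ ^ 2) * exp (z) * N (2 * θ) := by
    intro θ
    rw [hMdef, hNdef]
    dsimp only
    rw [cos_two_mul]
    have hσ' : σ ≠ 0 := ne_of_gt hσ
    have harg : (D * cos θ) ^ 2 / (2 * σ ^ 2) = z + z * (2 * cos θ ^ 2 - 1) := by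
      rw [hz, hDs]; field_simp; ring
    rw [harg, Real.exp_add]
    ring
  have step6 : (∫ θ in (0:ℝ)..π, M θ)
      = Real.sqrt (2 * π * σ ^ 2) * exp z
        * ((σ ^ 2 + D ^ 2 / 2) * (π * besselI0 z) + D ^ 2 / 2 * (π * besselI1 z)) := by
    rw [intervalIntegral.integral_congr (fun θ _ => hN2 θ),
      intervalIntegral.integral_const_mul]
    have hcm := intervalIntegral.integral_comp_mul_left (a := (0:ℝ)) (b := π) N
      (two_ne_zero)
    rw [mul_zero] at hcm
    rw [hcm, hdouble, smul_eq_mul, hNval]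
    ring
  -- Put everything together
  rw [step1, step2, step3, step4, step5, step6]
  have hσ' : σ ≠ 0 := ne_of_gt hσ
  have hsqrtσ : Real.sqrt (2 * π * σ ^ 2) = σ * Real.sqrt (2 * π) := by
    rw [show 2 * π * σ ^ 2 = σ ^ 2 * (2 * π) by ring, Real.sqrt_mul (sq_nonneg σ),
      Real.sqrt_sq hσ.le]
  have hsqrt8 : Real.sqrt (2 * π) = 4 * Real.sqrt (π / 8) := by
    rw [show (2 * π : ℝ) = 4 ^ 2 * (π / 8) by ring,
      Real.sqrt_mul (by norm_num : (0:ℝ) ≤ 4 ^ 2), Real.sqrt_sq (by norm_num : (0:ℝ) ≤ 4)]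
  have hexp2 : exp (-D ^ 2 / (2 * σ ^ 2)) * exp z = exp (-s ^ 2 / 4) := by
    rw [← Real.exp_add, hz, hDs]
    congr 1
    field_simp
    ring
  rw [hC, hsqrtσ, hsqrt8, hDs]
  calc 1 / (2 * π * σ ^ 2) * exp (-(s * σ) ^ 2 / (2 * σ ^ 2))
        * (σ * (4 * Real.sqrt (π / 8)) * exp z
          * ((σ ^ 2 + (s * σ) ^ 2 / 2) * (π * besselI0 z)
            + (s * σ) ^ 2 / 2 * (π * besselI1 z)))
      = (exp (-(s * σ) ^ 2 / (2 * σ ^ 2)) * exp z) * (σ * Real.sqrt (π / 8))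
          * ((s ^ 2 + 2) * besselI0 z + s ^ 2 * besselI1 z) := by
        field_simp
        ring
    _ = σ * Real.sqrt (π / 8) * exp (-s ^ 2 / 4)
          * ((s ^ 2 + 2) * besselI0 z + s ^ 2 * besselI1 z) := by
        rw [show -(s * σ) ^ 2 / (2 * σ ^ 2) = -D ^ 2 / (2 * σ ^ 2) by rw [hDs], hexp2]
        ring
end

section
/- Let λ > 0, D > 0 and φ₀ ∈ (0, 2π]. Set s = (λ·φ₀·D²)^{−1/2}, and define erf(x) = (2/√π)·∫₀^x e^{−t²} dt and γ(s, φ₀) = √(π/2)·{1 + [8·(1 − cos(φ₀/4))/φ₀ − 2]·erf(1/(√2·s))}. Then ∫₀^∞ ∫_{−φ₀/2}^{φ₀/2} λ·ρ·e^{−λ·φ₀·ρ²/2} · √(ρ² + D² − 2ρD·cos φ) dφ dρ ≤ D·(1 + s·γ(s, φ₀)). -/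
open MeasureTheory Real

/-- The Gauss error function. -/
noncomputable def erf (x : ℝ) : ℝ := (2 / Real.sqrt π) * ∫ t in (0:ℝ)..x, exp (-t ^ 2)

/-- The function `γ(s, φ₀)` from the paper. -/
noncomputable def gammaFn (s φ₀ : ℝ) : ℝ :=
  Real.sqrt (π / 2) *
    (1 + (8 * (1 - cos (φ₀ / 4)) / φ₀ - 2) * erf (1 / (Real.sqrt 2 * s)))

section StmtAux

open Filter Set

private lemma sqrt_bound' (ρ D φ : ℝ) (hρ : 0 ≤ ρ) (hD : 0 ≤ D) :
    Real.sqrt (ρ ^ 2 + D ^ 2 - 2 * ρ * D * cos φ) ≤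
      |D - ρ| + 2 * min ρ D * |sin (φ / 2)| := by
  have hs2 : sin (φ / 2) ^ 2 = (1 - cos φ) / 2 := by
    have hc := Real.cos_two_mul (φ / 2)
    rw [show 2 * (φ / 2) = φ by ring] at hc
    have hp := Real.sin_sq_add_cos_sq (φ / 2)
    linarith
  have key : ρ ^ 2 + D ^ 2 - 2 * ρ * D * cos φ
      = (D - ρ) ^ 2 + 4 * ρ * D * sin (φ / 2) ^ 2 := by
    linear_combination (-(4 * ρ * D)) * hs2
  set R := |D - ρ| + 2 * min ρ D * |sin (φ / 2)| with hR
  have hRnn : 0 ≤ R := by positivity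
  have hmm : min ρ D * max ρ D = ρ * D := min_mul_max ρ D
  have habs : max ρ D - min ρ D = |D - ρ| := by
    rw [max_sub_min_eq_abs, abs_sub_comm]
  have hsle : |sin (φ / 2)| ≤ 1 := abs_sin_le_one _
  have hsnn : 0 ≤ |sin (φ / 2)| := abs_nonneg _
  have hmn : 0 ≤ min ρ D := le_min hρ hD
  have hMm : 0 ≤ max ρ D - min ρ D := sub_nonneg.2 (min_le_max)
  have hle : ρ ^ 2 + D ^ 2 - 2 * ρ * D * cos φ ≤ R ^ 2 := by
    rw [key, hR]
    have h1 : sin (φ / 2) ^ 2 = |sin (φ / 2)| ^ 2 := (sq_abs _).symm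
    have hsq : (D - ρ) ^ 2 = (max ρ D - min ρ D) ^ 2 := by rw [habs, sq_abs]
    have main : (max ρ D - min ρ D) ^ 2 + 4 * (min ρ D * max ρ D) * |sin (φ / 2)| ^ 2
        ≤ ((max ρ D - min ρ D) + 2 * min ρ D * |sin (φ / 2)|) ^ 2 := by
      nlinarith [mul_nonneg (mul_nonneg hmn hMm) (mul_nonneg hsnn (sub_nonneg.2 hsle))]
    rw [habs] at main
    rw [h1]
    nlinarith [main, hmm, hsq]
  calc Real.sqrt (ρ ^ 2 + D ^ 2 - 2 * ρ * D * cos φ) ≤ Real.sqrt (R ^ 2) :=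
        Real.sqrt_le_sqrt hle
    _ = R := by rw [Real.sqrt_sq hRnn]

private lemma abs_sin_integral' {φ₀ : ℝ} (hφ : 0 < φ₀) (hφ2 : φ₀ ≤ 2 * π) :
    ∫ φ in (-(φ₀ / 2))..(φ₀ / 2), |sin (φ / 2)| = 4 * (1 - cos (φ₀ / 4)) := by
  have hcont : Continuous fun φ : ℝ => |sin (φ / 2)| := by fun_prop
  have h1 : ∫ φ in (0:ℝ)..(φ₀ / 2), |sin (φ / 2)| = 2 * (1 - cos (φ₀ / 4)) := by
    have hcg : ∀ φ ∈ Set.uIcc (0:ℝ) (φ₀ / 2), |sin (φ / 2)| = sin (φ / 2) := by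
      intro φ hφm
      rw [Set.uIcc_of_le (by linarith)] at hφm
      have h0 : 0 ≤ φ / 2 := by linarith [hφm.1]
      have hpi : φ / 2 ≤ π := by
        have := hφm.2
        have hππ : π > 0 := Real.pi_pos
        linarith
      exact abs_of_nonneg (Real.sin_nonneg_of_nonneg_of_le_pi h0 hpi)
    rw [intervalIntegral.integral_congr hcg]
    rw [intervalIntegral.integral_comp_div (f := fun x => sin x) (by norm_num : (2:ℝ) ≠ 0)]
    rw [integral_sin]
    simp [smul_eq_mul]
    ring
  have h2 : ∫ φ in (-(φ₀ / 2))..(0:ℝ), |sin (φ / 2)| = 2 * (1 - cos (φ₀ / 4)) := by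
    have := intervalIntegral.integral_comp_neg (a := (0:ℝ)) (b := φ₀ / 2)
      (f := fun φ => |sin (φ / 2)|)
    simp only [neg_zero] at this
    rw [← this]
    rw [← h1]
    apply intervalIntegral.integral_congr
    intro φ _
    simp [neg_div, Real.sin_neg, abs_neg]
  have hadd := intervalIntegral.integral_add_adjacent_intervals
    (a := -(φ₀ / 2)) (b := (0:ℝ)) (c := φ₀ / 2)
    (f := fun φ => |sin (φ / 2)|)
    (hcont.intervalIntegrable (μ := volume) (-(φ₀ / 2)) 0)
    (hcont.intervalIntegrable (μ := volume) 0 (φ₀ / 2))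
  rw [← hadd, h1, h2]; ring

private lemma cont_g' (μ : ℝ) : Continuous fun t : ℝ => exp (-(μ * t ^ 2) / 2) := by fun_prop

private lemma integrable_g' {μ : ℝ} (hμ : 0 < μ) :
    Integrable fun t : ℝ => exp (-(μ * t ^ 2) / 2) := by
  have h := integrable_exp_neg_mul_sq (show (0:ℝ) < μ / 2 by linarith)
  simpa [show ∀ t : ℝ, -(μ / 2) * t ^ 2 = -(μ * t ^ 2) / 2 from fun t => by ring] using h

private lemma hd_exp' (μ : ℝ) (x : ℝ) :
    HasDerivAt (fun ρ : ℝ => -exp (-(μ * ρ ^ 2) / 2)) (μ * x * exp (-(μ * x ^ 2) / 2)) x := by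
  have h : HasDerivAt (fun ρ : ℝ => -(μ * ρ ^ 2) / 2) (-(μ * x)) x := by
    have := ((hasDerivAt_pow 2 x).const_mul μ).neg.div_const 2
    refine this.congr_deriv ?_
    simp; ring
  have := (h.exp).neg
  refine this.congr_deriv ?_
  ring

private lemma hd_xexp' (μ : ℝ) (x : ℝ) :
    HasDerivAt (fun ρ : ℝ => -(ρ * exp (-(μ * ρ ^ 2) / 2)))
      ((μ * x ^ 2 - 1) * exp (-(μ * x ^ 2) / 2)) x := by
  have h : HasDerivAt (fun ρ : ℝ => -(μ * ρ ^ 2) / 2) (-(μ * x)) x := by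
    have := ((hasDerivAt_pow 2 x).const_mul μ).neg.div_const 2
    refine this.congr_deriv ?_
    simp; ring
  have := ((hasDerivAt_id x).mul h.exp).neg
  refine this.congr_deriv ?_
  simp only [id_eq]; ring

private lemma hd_A' {μ : ℝ} (hμ : 0 < μ) (x : ℝ) :
    HasDerivAt (fun ρ : ℝ => ∫ t in (0:ℝ)..ρ, exp (-(μ * t ^ 2) / 2))
      (exp (-(μ * x ^ 2) / 2)) x :=
  intervalIntegral.integral_hasDerivAt_right
    ((cont_g' μ).intervalIntegrable _ _)
    ((cont_g' μ).stronglyMeasurableAtFilter _ _)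
    (cont_g' μ).continuousAt

private lemma tendsto_xexp' {μ : ℝ} (hμ : 0 < μ) :
    Tendsto (fun x : ℝ => x * exp (-(μ * x ^ 2) / 2)) atTop (nhds 0) := by
  have h := rpow_mul_exp_neg_mul_sq_isLittleO_exp_neg (show (0:ℝ) < μ / 2 by linarith) 1
  have h2 : Tendsto (fun x : ℝ => exp (-(1/2) * x)) atTop (nhds 0) := by
    apply Real.tendsto_exp_atBot.comp
    have h3 : Tendsto (fun x : ℝ => x / 2) atTop atTop :=
      tendsto_id.atTop_div_const (by norm_num)
    exact (tendsto_neg_atTop_atBot.comp h3).congr fun x => by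
      simp [Function.comp]; ring
  have := h.isBigO.trans_tendsto h2
  simpa [Real.rpow_one, show ∀ x : ℝ, -(μ / 2) * x ^ 2 = -(μ * x ^ 2) / 2 from fun t => by ring]
    using this

private lemma tendsto_exp0' {μ : ℝ} (hμ : 0 < μ) :
    Tendsto (fun x : ℝ => exp (-(μ * x ^ 2) / 2)) atTop (nhds 0) := by
  apply Real.tendsto_exp_atBot.comp
  have h2 : Tendsto (fun x : ℝ => x ^ 2 * (μ / 2)) atTop atTop :=
    (tendsto_pow_atTop (by norm_num)).atTop_mul_const (by linarith)
  exact (tendsto_neg_atTop_atBot.comp h2).congr fun x => by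
    simp [Function.comp]; ring

private lemma tendsto_A' {μ : ℝ} (hμ : 0 < μ) :
    Tendsto (fun ρ : ℝ => ∫ t in (0:ℝ)..ρ, exp (-(μ * t ^ 2) / 2)) atTop
      (nhds (∫ t in Ioi (0:ℝ), exp (-(μ * t ^ 2) / 2))) :=
  intervalIntegral_tendsto_integral_Ioi 0 (integrable_g' hμ).integrableOn tendsto_id

private lemma int1' {μ : ℝ} (hμ : 0 < μ) (D : ℝ) :
    ∫ ρ in (0:ℝ)..D, μ * ρ * exp (-(μ * ρ ^ 2) / 2) = 1 - exp (-(μ * D ^ 2) / 2) := by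
  have h := intervalIntegral.integral_eq_sub_of_hasDerivAt (a := (0:ℝ)) (b := D)
    (f := fun ρ : ℝ => -exp (-(μ * ρ ^ 2) / 2))
    (f' := fun ρ : ℝ => μ * ρ * exp (-(μ * ρ ^ 2) / 2))
    (fun x _ => hd_exp' μ x)
    ((by fun_prop : Continuous fun ρ : ℝ => μ * ρ * exp (-(μ * ρ ^ 2) / 2)).intervalIntegrable 0 D)
  rw [h]; simp; ring

private lemma int2' {μ : ℝ} (hμ : 0 < μ) (D : ℝ) :
    ∫ ρ in (0:ℝ)..D, μ * ρ ^ 2 * exp (-(μ * ρ ^ 2) / 2)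
      = -(D * exp (-(μ * D ^ 2) / 2)) + ∫ t in (0:ℝ)..D, exp (-(μ * t ^ 2) / 2) := by
  have h := intervalIntegral.integral_eq_sub_of_hasDerivAt (a := (0:ℝ)) (b := D)
    (f := fun ρ : ℝ => -(ρ * exp (-(μ * ρ ^ 2) / 2)) + ∫ t in (0:ℝ)..ρ, exp (-(μ * t ^ 2) / 2))
    (f' := fun ρ : ℝ => μ * ρ ^ 2 * exp (-(μ * ρ ^ 2) / 2))
    (fun x _ => by
      have := (hd_xexp' μ x).add (hd_A' hμ x)
      refine this.congr_deriv ?_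
      ring)
    ((by fun_prop : Continuous fun ρ : ℝ => μ * ρ ^ 2 * exp (-(μ * ρ ^ 2) / 2)).intervalIntegrable 0 D)
  rw [h]; simp

private noncomputable def gAux (μ D k : ℝ) : ℝ → ℝ := fun ρ =>
  -(ρ * exp (-(μ * ρ ^ 2) / 2)) + (∫ t in (0:ℝ)..ρ, exp (-(μ * t ^ 2) / 2))
    + (k - 1) * D * (-exp (-(μ * ρ ^ 2) / 2))

private lemma hd_gAux {μ D k : ℝ} (hμ : 0 < μ) (x : ℝ) :
    HasDerivAt (gAux μ D k)
      (μ * x * exp (-(μ * x ^ 2) / 2) * (x - D) + k * (D * (μ * x * exp (-(μ * x ^ 2) / 2)))) x := by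
  have h := ((hd_xexp' μ x).add (hd_A' hμ x)).add ((hd_exp' μ x).const_mul ((k - 1) * D))
  refine h.congr_deriv ?_
  ring

private lemma gAux_nonneg {μ D k : ℝ} (hμ : 0 < μ) (hD : 0 < D) (hk : 0 ≤ k) :
    ∀ x ∈ Set.Ioi D, 0 ≤ μ * x * exp (-(μ * x ^ 2) / 2) * (x - D)
      + k * (D * (μ * x * exp (-(μ * x ^ 2) / 2))) := by
  intro x hx
  have hx' : D < x := hx
  have hx0 : 0 < x := lt_trans hD hx'
  have h1 : 0 ≤ μ * x * exp (-(μ * x ^ 2) / 2) := by positivity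
  have h2 : 0 ≤ x - D := by linarith
  have h3 : 0 ≤ k * (D * (μ * x * exp (-(μ * x ^ 2) / 2))) := by positivity
  nlinarith [mul_nonneg h1 h2]

private lemma tendsto_gAux {μ D k : ℝ} (hμ : 0 < μ) :
    Tendsto (gAux μ D k) atTop (nhds (∫ t in Ioi (0:ℝ), exp (-(μ * t ^ 2) / 2))) := by
  have t1 := (tendsto_xexp' hμ).neg
  have t2 := tendsto_A' hμ
  have t3 := ((tendsto_exp0' hμ).neg).const_mul ((k - 1) * D)
  have h := (t1.add t2).add t3
  norm_num at h
  refine h.congr fun x => ?_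
  simp only [gAux]
  ring

private lemma intIoi_integrable {μ D k : ℝ} (hμ : 0 < μ) (hD : 0 < D) (hk : 0 ≤ k) :
    IntegrableOn (fun ρ : ℝ => μ * ρ * exp (-(μ * ρ ^ 2) / 2) * (ρ - D)
      + k * (D * (μ * ρ * exp (-(μ * ρ ^ 2) / 2)))) (Set.Ioi D) :=
  integrableOn_Ioi_deriv_of_nonneg' (fun x _ => hd_gAux hμ x) (gAux_nonneg hμ hD hk)
    (tendsto_gAux hμ)

private lemma intIoi_eq {μ D k : ℝ} (hμ : 0 < μ) (hD : 0 < D) (hk : 0 ≤ k) :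
    ∫ ρ in Set.Ioi D, (μ * ρ * exp (-(μ * ρ ^ 2) / 2) * (ρ - D)
        + k * (D * (μ * ρ * exp (-(μ * ρ ^ 2) / 2))))
      = (∫ t in Set.Ioi (0:ℝ), exp (-(μ * t ^ 2) / 2))
        - (∫ t in (0:ℝ)..D, exp (-(μ * t ^ 2) / 2)) + k * D * exp (-(μ * D ^ 2) / 2) := by
  have h := integral_Ioi_of_hasDerivAt_of_nonneg' (fun x _ => hd_gAux hμ (x : ℝ))
    (gAux_nonneg hμ hD hk) (tendsto_gAux (D := D) (k := k) hμ)
  rw [h]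
  simp only [gAux]
  ring

private lemma AI_val {μ : ℝ} (hμ : 0 < μ) :
    ∫ t in Ioi (0:ℝ), exp (-(μ * t ^ 2) / 2) = Real.sqrt (π / 2) / Real.sqrt μ := by
  have h := integral_gaussian_Ioi (μ / 2)
  have he : ∀ t : ℝ, -(μ / 2) * t ^ 2 = -(μ * t ^ 2) / 2 := fun t => by ring
  simp_rw [he] at h
  rw [h]
  have h4 : π / (μ / 2) = (π / 2) * (4 / μ) := by field_simp; ring
  rw [h4, Real.sqrt_mul (by positivity), Real.sqrt_div' 4 hμ.le,
    show Real.sqrt 4 = 2 by rw [show (4:ℝ) = 2 ^ 2 by norm_num, Real.sqrt_sq (by norm_num)]]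
  field_simp

private lemma subst_I {μ : ℝ} (hμ : 0 < μ) (D : ℝ) :
    ∫ t in (0:ℝ)..D, exp (-(μ * t ^ 2) / 2)
      = (Real.sqrt (μ / 2))⁻¹ * ∫ t in (0:ℝ)..(Real.sqrt (μ / 2) * D), exp (-t ^ 2) := by
  have hc : (0:ℝ) < Real.sqrt (μ / 2) := Real.sqrt_pos.2 (by positivity)
  have hsub := intervalIntegral.integral_comp_mul_left (f := fun y : ℝ => exp (-y ^ 2))
    (a := (0:ℝ)) (b := D) (c := Real.sqrt (μ / 2)) hc.ne'
  have he : ∀ t : ℝ, exp (-(Real.sqrt (μ / 2) * t) ^ 2) = exp (-(μ * t ^ 2) / 2) := by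
    intro t
    congr 1
    rw [mul_pow, Real.sq_sqrt (by positivity : (0:ℝ) ≤ μ / 2)]
    ring
  simp_rw [he] at hsub
  rw [hsub]
  simp [smul_eq_mul]

private lemma coeff_eq {μ : ℝ} (hμ : 0 < μ) :
    Real.sqrt (π / 2) / Real.sqrt μ * (2 / Real.sqrt π) = (Real.sqrt (μ / 2))⁻¹ := by
  rw [Real.sqrt_div' π (by norm_num : (0:ℝ) ≤ 2), Real.sqrt_div' μ (by norm_num : (0:ℝ) ≤ 2)]
  have hπ : (0:ℝ) < Real.sqrt π := Real.sqrt_pos.2 Real.pi_pos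
  have h2 : (0:ℝ) < Real.sqrt 2 := Real.sqrt_pos.2 (by norm_num)
  have hμ' : (0:ℝ) < Real.sqrt μ := Real.sqrt_pos.2 hμ
  field_simp
  have h22 : Real.sqrt 2 * Real.sqrt 2 = 2 := Real.mul_self_sqrt (by norm_num)
  linear_combination (-1 : ℝ) * h22

private lemma s_eq {μ D : ℝ} (hμ : 0 < μ) (hD : 0 < D) :
    (μ * D ^ 2) ^ (-(1:ℝ) / 2) = 1 / (Real.sqrt μ * D) := by
  have h1 : (0:ℝ) < μ * D ^ 2 := by positivity
  rw [show (-(1:ℝ) / 2) = -(1 / 2) by norm_num, Real.rpow_neg h1.le, ← Real.sqrt_eq_rpow,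
    Real.sqrt_mul hμ.le, Real.sqrt_sq hD.le]
  rw [one_div]

end StmtAux

theorem stmt_10 (l D φ₀ s : ℝ) (hl : 0 < l) (hD : 0 < D) (hφ : 0 < φ₀)
    (hφ2 : φ₀ ≤ 2 * π) (hs : s = (l * φ₀ * D ^ 2) ^ (-(1:ℝ) / 2)) :
    (∫ ρ in Set.Ioi (0 : ℝ), ∫ φ in (-(φ₀ / 2))..(φ₀ / 2),
        l * ρ * exp (-(l * φ₀ * ρ ^ 2) / 2) *
          Real.sqrt (ρ ^ 2 + D ^ 2 - 2 * ρ * D * cos φ)) ≤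
      D * (1 + s * gammaFn s φ₀) := by
  have hμ : 0 < l * φ₀ := mul_pos hl hφ
  set μ := l * φ₀ with hμdef
  set k := 8 * (1 - cos (φ₀ / 4)) / φ₀ with hkdef
  have hk : 0 ≤ k := by
    have hc1 := Real.cos_le_one (φ₀ / 4)
    apply div_nonneg _ hφ.le
    nlinarith
  set G : ℝ → ℝ := fun ρ => μ * ρ * exp (-(μ * ρ ^ 2) / 2) * |D - ρ|
      + k * (μ * ρ * exp (-(μ * ρ ^ 2) / 2) * min ρ D) with hGdef
  have hGcont : Continuous G := by
    apply Continuous.add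
    · exact (by fun_prop : Continuous fun ρ : ℝ => μ * ρ * exp (-(μ * ρ ^ 2) / 2)).mul
        (continuous_const.sub continuous_id).abs
    · exact continuous_const.mul
        ((by fun_prop : Continuous fun ρ : ℝ => μ * ρ * exp (-(μ * ρ ^ 2) / 2)).mul
          (continuous_id.min continuous_const))
  have hGIoi : IntegrableOn G (Set.Ioi D) := by
    refine (intIoi_integrable hμ hD hk).congr_fun ?_ measurableSet_Ioi
    intro x hx
    have hx' : D < x := hx
    simp only [hGdef]
    rw [abs_of_neg (by linarith : D - x < 0), min_eq_right hx'.le]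
    ring
  have hGIoc : IntegrableOn G (Set.Ioc 0 D) := hGcont.integrableOn_Ioc
  have hGIoi0 : IntegrableOn G (Set.Ioi 0) := by
    rw [← Set.Ioc_union_Ioi_eq_Ioi hD.le]
    exact hGIoc.union hGIoi
  have hbound : (∫ ρ in Set.Ioi (0 : ℝ), ∫ φ in (-(φ₀ / 2))..(φ₀ / 2),
      l * ρ * exp (-(μ * ρ ^ 2) / 2) * Real.sqrt (ρ ^ 2 + D ^ 2 - 2 * ρ * D * cos φ))
      ≤ ∫ ρ in Set.Ioi (0:ℝ), G ρ := by
    apply integral_mono_of_nonneg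
    · rw [Filter.EventuallyLE, ae_restrict_iff' measurableSet_Ioi]
      apply Filter.Eventually.of_forall
      intro ρ hρ
      have hρ0 : 0 < ρ := hρ
      apply intervalIntegral.integral_nonneg (by linarith)
      intro φ _
      positivity
    · exact hGIoi0
    · rw [Filter.EventuallyLE, ae_restrict_iff' measurableSet_Ioi]
      apply Filter.Eventually.of_forall
      intro ρ hρ
      have hρ0 : 0 < ρ := hρ
      have hc : 0 ≤ l * ρ * exp (-(μ * ρ ^ 2) / 2) := by positivity
      have hcont1 : Continuous fun φ : ℝ => Real.sqrt (ρ ^ 2 + D ^ 2 - 2 * ρ * D * cos φ) :=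
        Real.continuous_sqrt.comp (by fun_prop)
      have hcont2 : Continuous fun φ : ℝ => |D - ρ| + 2 * min ρ D * |sin (φ / 2)| := by
        fun_prop
      have hmono : (∫ φ in (-(φ₀ / 2))..(φ₀ / 2), Real.sqrt (ρ ^ 2 + D ^ 2 - 2 * ρ * D * cos φ))
          ≤ ∫ φ in (-(φ₀ / 2))..(φ₀ / 2), (|D - ρ| + 2 * min ρ D * |sin (φ / 2)|) := by
        apply intervalIntegral.integral_mono_on (by linarith)
          (hcont1.intervalIntegrable _ _) (hcont2.intervalIntegrable _ _)
        intro φ _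
        exact sqrt_bound' ρ D φ hρ0.le hD.le
      have hval : (∫ φ in (-(φ₀ / 2))..(φ₀ / 2), (|D - ρ| + 2 * min ρ D * |sin (φ / 2)|))
          = φ₀ * |D - ρ| + 2 * min ρ D * (4 * (1 - cos (φ₀ / 4))) := by
        rw [intervalIntegral.integral_add (intervalIntegrable_const)
          (((by fun_prop : Continuous fun φ : ℝ => 2 * min ρ D * |sin (φ / 2)|)).intervalIntegrable _ _)]
        rw [intervalIntegral.integral_const, intervalIntegral.integral_const_mul,
          abs_sin_integral' hφ hφ2]
        simp [smul_eq_mul]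
        try ring
      calc (∫ φ in (-(φ₀ / 2))..(φ₀ / 2),
            l * ρ * exp (-(μ * ρ ^ 2) / 2) * Real.sqrt (ρ ^ 2 + D ^ 2 - 2 * ρ * D * cos φ))
          = l * ρ * exp (-(μ * ρ ^ 2) / 2) *
            ∫ φ in (-(φ₀ / 2))..(φ₀ / 2), Real.sqrt (ρ ^ 2 + D ^ 2 - 2 * ρ * D * cos φ) := by
            rw [intervalIntegral.integral_const_mul]
        _ ≤ l * ρ * exp (-(μ * ρ ^ 2) / 2) *
            (φ₀ * |D - ρ| + 2 * min ρ D * (4 * (1 - cos (φ₀ / 4)))) := by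
            rw [← hval]
            exact mul_le_mul_of_nonneg_left hmono hc
        _ = G ρ := by
            simp only [hGdef, hkdef, hμdef]
            field_simp
            ring
  refine hbound.trans ?_
  -- now compute the integral of G exactly
  have hsplit : (∫ ρ in Set.Ioi (0:ℝ), G ρ)
      = (∫ ρ in Set.Ioc (0:ℝ) D, G ρ) + ∫ ρ in Set.Ioi D, G ρ := by
    rw [← Set.Ioc_union_Ioi_eq_Ioi hD.le]
    exact setIntegral_union (Set.Ioc_disjoint_Ioi le_rfl) measurableSet_Ioi hGIoc hGIoi
  have hIocval : (∫ ρ in Set.Ioc (0:ℝ) D, G ρ)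
      = D * (1 - exp (-(μ * D ^ 2) / 2))
        + (k - 1) * (-(D * exp (-(μ * D ^ 2) / 2)) + ∫ t in (0:ℝ)..D, exp (-(μ * t ^ 2) / 2)) := by
    rw [← intervalIntegral.integral_of_le hD.le]
    have hcongr : Set.EqOn G (fun ρ => D * (μ * ρ * exp (-(μ * ρ ^ 2) / 2))
        + (k - 1) * (μ * ρ ^ 2 * exp (-(μ * ρ ^ 2) / 2))) (Set.uIcc 0 D) := by
      intro x hx
      rw [Set.uIcc_of_le hD.le] at hx
      simp only [hGdef]
      rw [abs_of_nonneg (by linarith [hx.2] : (0:ℝ) ≤ D - x), min_eq_left hx.2]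
      ring
    rw [intervalIntegral.integral_congr hcongr]
    rw [intervalIntegral.integral_add
      (((by fun_prop : Continuous fun ρ : ℝ => D * (μ * ρ * exp (-(μ * ρ ^ 2) / 2)))).intervalIntegrable _ _)
      (((by fun_prop : Continuous fun ρ : ℝ => (k - 1) * (μ * ρ ^ 2 * exp (-(μ * ρ ^ 2) / 2)))).intervalIntegrable _ _)]
    rw [intervalIntegral.integral_const_mul, intervalIntegral.integral_const_mul,
      int1' hμ D, int2' hμ D]
  have hIoival : (∫ ρ in Set.Ioi D, G ρ)
      = (∫ t in Set.Ioi (0:ℝ), exp (-(μ * t ^ 2) / 2))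
        - (∫ t in (0:ℝ)..D, exp (-(μ * t ^ 2) / 2)) + k * D * exp (-(μ * D ^ 2) / 2) := by
    rw [← intIoi_eq hμ hD hk]
    apply setIntegral_congr_fun measurableSet_Ioi
    intro x hx
    have hx' : D < x := hx
    simp only [hGdef]
    rw [abs_of_neg (by linarith : D - x < 0), min_eq_right hx'.le]
    ring
  rw [hsplit, hIocval, hIoival, AI_val hμ, subst_I hμ D]
  -- now pure algebra
  have hsval : s = 1 / (Real.sqrt μ * D) := by
    rw [hs]; exact s_eq hμ hD
  have ha : 1 / (Real.sqrt 2 * s) = Real.sqrt (μ / 2) * D := by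
    rw [hsval, Real.sqrt_div' μ (by norm_num : (0:ℝ) ≤ 2)]
    have h2 : (0:ℝ) < Real.sqrt 2 := Real.sqrt_pos.2 (by norm_num)
    have hμ' : (0:ℝ) < Real.sqrt μ := Real.sqrt_pos.2 hμ
    field_simp
  rw [gammaFn, erf, ha, ← hkdef, hsval]
  have hco := coeff_eq hμ
  have hμ' : (0:ℝ) < Real.sqrt μ := Real.sqrt_pos.2 hμ
  have hR : (0:ℝ) < Real.sqrt (μ / 2) := Real.sqrt_pos.2 (by positivity)
  set X := ∫ t in (0:ℝ)..(Real.sqrt (μ / 2) * D), exp (-t ^ 2) with hX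
  apply le_of_eq
  have hrhs : D * (1 + 1 / (Real.sqrt μ * D) *
      (Real.sqrt (π / 2) * (1 + (k - 2) * (2 / Real.sqrt π * X))))
      = D + Real.sqrt (π / 2) / Real.sqrt μ
        + (k - 2) * ((Real.sqrt (π / 2) / Real.sqrt μ * (2 / Real.sqrt π)) * X) := by
    have hπ : (0:ℝ) < Real.sqrt π := Real.sqrt_pos.2 Real.pi_pos
    field_simp
    ring
  rw [hrhs, hco]
  ring
end

section
/- Let α > 2 be a real number and let ν₀ satisfy 0 < ν₀ ≤ (3 − √5)/2. Then for every ν in the closed interval [ν₀, (1 + 2/α)·ν₀], the quadratic ν² − (ν₀ + 4)·ν + 2·(1 + ν₀) is strictly positive. -/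
theorem stmt_11 (α ν₀ : ℝ) (hα : 2 < α) (h0 : 0 < ν₀)
    (h1 : ν₀ ≤ (3 - Real.sqrt 5) / 2)
    (ν : ℝ) (hν : ν ∈ Set.Icc ν₀ ((1 + 2 / α) * ν₀)) :
    0 < ν ^ 2 - (ν₀ + 4) * ν + 2 * (1 + ν₀) := by
  obtain ⟨hl, hr⟩ := hν
  have hs : Real.sqrt 5 ^ 2 = 5 := Real.sq_sqrt (by norm_num)
  have hs2 : (2:ℝ) ≤ Real.sqrt 5 := by nlinarith [Real.sqrt_nonneg 5]
  have hs3 : Real.sqrt 5 ≤ 3 := by nlinarith [Real.sqrt_nonneg 5]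
  have hdiv : 2 / α < 1 := (div_lt_one (by linarith)).2 hα
  have hν2 : ν < 2 * ν₀ := by nlinarith
  -- ν₀² - 3ν₀ + 1 ≥ 0
  have hq : ν₀ ^ 2 - 3 * ν₀ + 1 ≥ 0 := by nlinarith
  have hν₀ : ν₀ < 1 := by nlinarith
  nlinarith [mul_pos (sub_pos.2 hν2) (by nlinarith : (0:ℝ) < 4 - ν - ν₀)]
end

section
/- Let α ≥ 2 be a real number, let ν₀ satisfy 0 ≤ ν₀ ≤ (3 − √5)/2, and set ν₁ = (1 + 2/α)·ν₀. Then e^{−ν₀} − e^{−ν₁}·(1 + ν₁) ≤ ν₀·e^{−ν₁}·((4/α²)·ν₀ − 1). -/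
open Real

lemma exp_le_one_add_add_sq {x : ℝ} (h0 : 0 ≤ x) (h1 : x ≤ 1) :
    Real.exp x ≤ 1 + x + x ^ 2 := by
  have h := Real.exp_bound' h0 h1 (n := 3) (by norm_num)
  have hx3 : x ^ 3 ≤ x ^ 2 := pow_le_pow_of_le_one h0 h1 (by norm_num)
  norm_num [Finset.sum_range_succ, Nat.factorial] at h
  nlinarith

theorem stmt_12 (α ν₀ ν₁ : ℝ) (hα : 2 ≤ α) (h0 : 0 ≤ ν₀)
    (h1 : ν₀ ≤ (3 - Real.sqrt 5) / 2) (hν₁ : ν₁ = (1 + 2 / α) * ν₀) :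
    exp (-ν₀) - exp (-ν₁) * (1 + ν₁) ≤ ν₀ * exp (-ν₁) * ((4 / α ^ 2) * ν₀ - 1) := by
  have hαpos : (0:ℝ) < α := lt_of_lt_of_le two_pos hα
  have hsqrt5 : (1:ℝ) ≤ Real.sqrt 5 := by
    rw [show (1:ℝ) = Real.sqrt 1 by simp]
    exact Real.sqrt_le_sqrt (by norm_num)
  have hν01 : ν₀ ≤ 1 := by linarith
  set x := 2 / α * ν₀ with hx
  have hx0 : 0 ≤ x := mul_nonneg (by positivity) h0
  have hxle : x ≤ ν₀ := by
    have : 2 / α ≤ 1 := (div_le_one hαpos).2 hα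
    nlinarith
  have hx1 : x ≤ 1 := hxle.trans hν01
  have key := exp_le_one_add_add_sq hx0 hx1
  have hsplit : exp (-ν₀) = exp (-ν₁) * exp x := by
    rw [← Real.exp_add]
    congr 1
    rw [hν₁, hx]; ring
  have hx2 : x ^ 2 = 4 / α ^ 2 * ν₀ ^ 2 := by
    rw [hx]; ring
  have hν₁x : ν₁ = ν₀ + x := by rw [hν₁, hx]; ring
  have hE : 0 < exp (-ν₁) := Real.exp_pos _
  rw [hsplit]
  have : exp (-ν₁) * exp x ≤ exp (-ν₁) * (1 + x + x ^ 2) :=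
    mul_le_mul_of_nonneg_left key hE.le
  calc exp (-ν₁) * exp x - exp (-ν₁) * (1 + ν₁)
      ≤ exp (-ν₁) * (1 + x + x ^ 2) - exp (-ν₁) * (1 + ν₁) := by linarith
    _ = exp (-ν₁) * (x ^ 2 - ν₀) := by rw [hν₁x]; ring
    _ = ν₀ * exp (-ν₁) * ((4 / α ^ 2) * ν₀ - 1) := by rw [hx2]; ring
end

section
/- Fix real parameters α > 2, D > 0, φ₀ ∈ (0, 2π], and ν₀ with 0 < ν₀ ≤ (3 − √5)/2. For σ > 0 define λ(σ) = 1/(2πσ²), A(σ) = φ₀·λ(σ)·D², E(σ) = ∫₀^∞ ∫_{−φ₀/2}^{φ₀/2} λ(σ)·ρ·e^{−λ(σ)·φ₀·ρ²/2}·√(ρ² + D² − 2ρD·cos φ) dφ dρ, and for p ∈ [0,1] set ν(p) = ν₀·(1 + 2p/α) and F(σ, p) = (1 − p)·(1 − e^{−ν(p)}) + p·[ 2 − A(σ)/(A(σ) + 2ν(p)) − e^{−ν(p)}·(1 + ν(p)·(1 + ((2 − α)/(α·D))·E(σ))) ]. Then there exists σ_c > 0 such that for every σ ∈ (0, σ_c],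 the function p ↦ F(σ, p) is concave on [0, 1]. -/
open MeasureTheory Real Filter

lemma gauss_first_moment {c : ℝ} (hc : 0 < c) :
    ∫ r in Set.Ioi (0:ℝ), r * Real.exp (-c * r ^ 2) = (2*c)⁻¹ := by
  have A : ∀ x:ℝ, HasDerivAt (fun x : ℝ => -(2*c)⁻¹ * Real.exp (-c*x^2))
      (x * Real.exp (-c*x^2)) x := by
    intro x
    refine (((hasDerivAt_pow 2 x).const_mul (-c)).exp.const_mul (-(2*c)⁻¹)).congr_deriv ?_
    field_simp
    ring
  have B : Tendsto (fun y:ℝ => -(2*c)⁻¹ * Real.exp (-c*y^2)) atTop (nhds (-(2*c)⁻¹ * 0)) := by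
    refine Tendsto.const_mul _ ?_
    exact Real.tendsto_exp_atBot.comp
      ((tendsto_pow_atTop two_ne_zero).const_mul_atTop_of_neg (neg_lt_zero.2 hc))
  have := integral_Ioi_of_hasDerivAt_of_tendsto' (a := 0) (fun x _ => A x)
    (integrable_mul_exp_neg_mul_sq hc).integrableOn B
  rw [this]
  norm_num

lemma Ebound (D φ₀ lam : ℝ) (hD : 0 < D) (hφ : 0 < φ₀) (hlam : 0 < lam) :
    |(∫ ρ in Set.Ioi (0:ℝ), ∫ φ in (-(φ₀ / 2))..(φ₀ / 2),
        lam * ρ * Real.exp (-(lam * φ₀ * ρ ^ 2) / 2) *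
          Real.sqrt (ρ ^ 2 + D ^ 2 - 2 * ρ * D * Real.cos φ)) - D|
      ≤ 4 / Real.sqrt (lam * φ₀) := by
  set a : ℝ := lam * φ₀ / 2 with ha_def
  have ha : 0 < a := by positivity
  set S : ℝ → ℝ := fun ρ => ∫ φ in (-(φ₀ / 2))..(φ₀ / 2),
      Real.sqrt (ρ ^ 2 + D ^ 2 - 2 * ρ * D * Real.cos φ) with hS_def
  -- continuity of S
  have hS_cont : Continuous S := by
    apply intervalIntegral.continuous_parametric_intervalIntegral_of_continuous' (μ := volume)
    fun_prop
  -- pointwise sqrt bound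
  have hsq : ∀ ρ : ℝ, 0 ≤ ρ → ∀ φ : ℝ,
      |Real.sqrt (ρ ^ 2 + D ^ 2 - 2 * ρ * D * Real.cos φ) - D| ≤ ρ := by
    intro ρ hρ φ
    have hc1 : Real.cos φ ≤ 1 := Real.cos_le_one φ
    have hc2 : -1 ≤ Real.cos φ := Real.neg_one_le_cos φ
    have h1 : Real.sqrt (ρ ^ 2 + D ^ 2 - 2 * ρ * D * Real.cos φ) ≤ D + ρ := by
      have h0 : 0 ≤ ρ * D * (1 + Real.cos φ) :=
        mul_nonneg (mul_nonneg hρ hD.le) (by linarith)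
      have : ρ ^ 2 + D ^ 2 - 2 * ρ * D * Real.cos φ ≤ (D + ρ) ^ 2 := by nlinarith
      calc Real.sqrt (ρ ^ 2 + D ^ 2 - 2 * ρ * D * Real.cos φ) ≤ Real.sqrt ((D + ρ)^2) :=
            Real.sqrt_le_sqrt this
        _ = D + ρ := Real.sqrt_sq (by positivity)
    have h2 : D - ρ ≤ Real.sqrt (ρ ^ 2 + D ^ 2 - 2 * ρ * D * Real.cos φ) := by
      rcases le_or_gt (D - ρ) 0 with h | h
      · exact le_trans h (Real.sqrt_nonneg _)
      · have h0' : 0 ≤ ρ * D * (1 - Real.cos φ) :=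
          mul_nonneg (mul_nonneg hρ hD.le) (by linarith)
        have : (D - ρ) ^ 2 ≤ ρ ^ 2 + D ^ 2 - 2 * ρ * D * Real.cos φ := by nlinarith [h0']
        calc D - ρ = Real.sqrt ((D - ρ)^2) := (Real.sqrt_sq h.le).symm
          _ ≤ _ := Real.sqrt_le_sqrt this
    rw [abs_le]; constructor <;> linarith
  -- bound on S
  have hS_bound : ∀ ρ : ℝ, 0 ≤ ρ → |S ρ - φ₀ * D| ≤ φ₀ * ρ := by
    intro ρ hρ
    have hint : IntervalIntegrable (fun φ => Real.sqrt (ρ ^ 2 + D ^ 2 - 2 * ρ * D * Real.cos φ))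
        volume (-(φ₀ / 2)) (φ₀ / 2) := by
      apply Continuous.intervalIntegrable; fun_prop
    have h1 : S ρ - φ₀ * D = ∫ φ in (-(φ₀ / 2))..(φ₀ / 2),
        (Real.sqrt (ρ ^ 2 + D ^ 2 - 2 * ρ * D * Real.cos φ) - D) := by
      rw [intervalIntegral.integral_sub hint intervalIntegrable_const,
        intervalIntegral.integral_const]
      simp [hS_def]
    rw [h1]
    have := intervalIntegral.norm_integral_le_of_norm_le_const
      (C := ρ) (a := -(φ₀/2)) (b := φ₀/2)
      (f := fun φ => Real.sqrt (ρ ^ 2 + D ^ 2 - 2 * ρ * D * Real.cos φ) - D)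
      (fun x _ => by simpa using hsq ρ hρ x)
    calc _ ≤ ρ * |φ₀ / 2 - -(φ₀ / 2)| := this
      _ = φ₀ * ρ := by rw [abs_of_nonneg (by linarith)]; ring
  -- rewrite the integrand
  have key : ∀ ρ : ℝ, (∫ φ in (-(φ₀ / 2))..(φ₀ / 2),
        lam * ρ * Real.exp (-(lam * φ₀ * ρ ^ 2) / 2) *
          Real.sqrt (ρ ^ 2 + D ^ 2 - 2 * ρ * D * Real.cos φ))
      = lam * ρ * Real.exp (-a * ρ ^ 2) * S ρ := by
    intro ρ
    rw [show -(lam * φ₀ * ρ ^ 2) / 2 = -a * ρ ^ 2 by rw [ha_def]; ring]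
    exact intervalIntegral.integral_const_mul _ _
  simp_rw [key]
  have sqa : (0:ℝ) < Real.sqrt (a/2) := Real.sqrt_pos.mpr (by positivity)
  have hdom : ∀ ρ:ℝ, 0 ≤ ρ →
      ρ^2 * Real.exp (-a*ρ^2) ≤ (Real.sqrt (a/2))⁻¹ * (ρ * Real.exp (-(a/2)*ρ^2)) := by
    intro ρ hρ
    have ht2 : (ρ * Real.sqrt (a/2))^2 = a/2 * ρ^2 := by
      rw [mul_pow, Real.sq_sqrt (by positivity : (0:ℝ) ≤ a/2)]; ring
    have h1 : ρ * Real.sqrt (a/2) ≤ Real.exp (a/2*ρ^2) := by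
      have t1 : ρ * Real.sqrt (a/2) ≤ 1 + a/2*ρ^2 := by nlinarith [sq_nonneg (ρ * Real.sqrt (a/2) - 1)]
      have t2 := Real.add_one_le_exp (a/2*ρ^2)
      linarith
    have h2 : ρ ≤ (Real.sqrt (a/2))⁻¹ * Real.exp (a/2*ρ^2) := by
      rw [inv_mul_eq_div, le_div_iff₀ sqa]
      exact h1
    have h3 : Real.exp (a/2*ρ^2) * Real.exp (-a*ρ^2) = Real.exp (-(a/2)*ρ^2) := by
      rw [← Real.exp_add]; congr 1; ring
    calc ρ^2 * Real.exp (-a*ρ^2) = ρ * (ρ * Real.exp (-a*ρ^2)) := by ring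
      _ ≤ ((Real.sqrt (a/2))⁻¹ * Real.exp (a/2*ρ^2)) * (ρ * Real.exp (-a*ρ^2)) := by
          apply mul_le_mul_of_nonneg_right h2 (by positivity)
      _ = (Real.sqrt (a/2))⁻¹ * (ρ * (Real.exp (a/2*ρ^2) * Real.exp (-a*ρ^2))) := by ring
      _ = (Real.sqrt (a/2))⁻¹ * (ρ * Real.exp (-(a/2)*ρ^2)) := by rw [h3]
  set C0 : ℝ := lam * φ₀ * (Real.sqrt (a/2))⁻¹ with hC0_def
  set M : ℝ → ℝ := fun ρ => C0 * (ρ * Real.exp (-(a/2) * ρ ^ 2)) with hM_def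
  have hM_int : IntegrableOn M (Set.Ioi (0:ℝ)) :=
    ((integrable_mul_exp_neg_mul_sq (half_pos ha)).integrableOn.const_mul C0)
  set h2f : ℝ → ℝ := fun ρ => lam * ρ * Real.exp (-a * ρ ^ 2) * (S ρ - φ₀ * D) with hh2_def
  have h2_cont : Continuous h2f := by
    have c1 : Continuous fun ρ:ℝ => lam * ρ * Real.exp (-a * ρ ^ 2) := by fun_prop
    exact c1.mul (hS_cont.sub continuous_const)
  have h2_bound : ∀ ρ ∈ Set.Ioi (0:ℝ), ‖h2f ρ‖ ≤ M ρ := by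
    intro ρ hρ
    have hρ0 : (0:ℝ) < ρ := hρ
    have e1 : ‖h2f ρ‖ = lam * ρ * Real.exp (-a*ρ^2) * |S ρ - φ₀ * D| := by
      rw [hh2_def, Real.norm_eq_abs, abs_mul, abs_of_nonneg (by positivity : (0:ℝ) ≤ lam * ρ * Real.exp (-a*ρ^2))]
    rw [e1]
    calc lam * ρ * Real.exp (-a*ρ^2) * |S ρ - φ₀ * D|
        ≤ lam * ρ * Real.exp (-a*ρ^2) * (φ₀ * ρ) := by
          apply mul_le_mul_of_nonneg_left (hS_bound ρ hρ0.le) (by positivity)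
      _ = lam * φ₀ * (ρ^2 * Real.exp (-a*ρ^2)) := by ring
      _ ≤ lam * φ₀ * ((Real.sqrt (a/2))⁻¹ * (ρ * Real.exp (-(a/2)*ρ^2))) := by
          apply mul_le_mul_of_nonneg_left (hdom ρ hρ0.le) (by positivity)
      _ = M ρ := by rw [hM_def, hC0_def]; ring
  have h2_int : IntegrableOn h2f (Set.Ioi (0:ℝ)) :=
    Integrable.mono' hM_int h2_cont.aestronglyMeasurable
      ((ae_restrict_iff' measurableSet_Ioi).mpr (Filter.Eventually.of_forall h2_bound))
  have base_int : IntegrableOn (fun ρ => lam * φ₀ * D * (ρ * Real.exp (-a * ρ ^ 2))) (Set.Ioi (0:ℝ)) :=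
    (integrable_mul_exp_neg_mul_sq ha).integrableOn.const_mul _
  have split : (fun ρ => lam * ρ * Real.exp (-a * ρ ^ 2) * S ρ)
      = fun ρ => h2f ρ + lam * φ₀ * D * (ρ * Real.exp (-a * ρ ^ 2)) := by
    funext ρ; rw [hh2_def]; ring
  have base_val : ∫ ρ in Set.Ioi (0:ℝ), lam * φ₀ * D * (ρ * Real.exp (-a * ρ ^ 2)) = D := by
    rw [MeasureTheory.integral_const_mul, gauss_first_moment ha, ha_def]
    field_simp
  have main_eq : (∫ ρ in Set.Ioi (0:ℝ), lam * ρ * Real.exp (-a * ρ ^ 2) * S ρ) - D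
      = ∫ ρ in Set.Ioi (0:ℝ), h2f ρ := by
    rw [split, MeasureTheory.integral_add h2_int base_int, base_val]
    ring
  rw [main_eq]
  have hMval : ∫ ρ in Set.Ioi (0:ℝ), M ρ = C0 * a⁻¹ := by
    rw [hM_def, MeasureTheory.integral_const_mul, gauss_first_moment (half_pos ha)]
    congr 1
    rw [mul_div_assoc']
    norm_num
  have habs : |∫ ρ in Set.Ioi (0:ℝ), h2f ρ| ≤ C0 * a⁻¹ := by
    rw [← hMval, ← Real.norm_eq_abs]
    exact MeasureTheory.norm_integral_le_of_norm_le hM_int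
      ((ae_restrict_iff' measurableSet_Ioi).mpr (Filter.Eventually.of_forall h2_bound))
  refine le_trans habs (le_of_eq ?_)
  set s : ℝ := Real.sqrt (lam * φ₀) with hs_def
  have hs0 : 0 < s := Real.sqrt_pos.mpr (by positivity)
  have hs2 : s^2 = lam * φ₀ := Real.sq_sqrt (by positivity)
  have hsa : Real.sqrt (a/2) = s/2 := by
    rw [show a/2 = (s/2)^2 by rw [div_pow, hs2, ha_def]; ring]
    exact Real.sqrt_sq (by positivity)
  rw [hC0_def, hsa, ha_def, ← hs2]
  field_simp
  ring



lemma concaveOn_Icc_of_deriv2 (f f₁ f₂ : ℝ → ℝ)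
    (h1 : ∀ p ∈ Set.Icc (0:ℝ) 1, HasDerivAt f (f₁ p) p)
    (h2 : ∀ p ∈ Set.Icc (0:ℝ) 1, HasDerivAt f₁ (f₂ p) p)
    (h3 : ∀ p ∈ Set.Ioo (0:ℝ) 1, f₂ p ≤ 0) :
    ConcaveOn ℝ (Set.Icc 0 1) f := by
  refine concaveOn_of_hasDerivWithinAt2_nonpos (f' := f₁) (f'' := f₂) (convex_Icc 0 1) ?_ ?_ ?_ ?_
  · intro p hp
    exact ((h1 p hp).continuousAt).continuousWithinAt
  · intro p hp
    rw [interior_Icc] at hp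
    exact (h1 p (Set.mem_Icc_of_Ioo hp)).hasDerivWithinAt
  · intro p hp
    rw [interior_Icc] at hp
    exact (h2 p (Set.mem_Icc_of_Ioo hp)).hasDerivWithinAt
  · intro p hp
    rw [interior_Icc] at hp
    exact h3 p hp


lemma micro_claim2 (Q w b ε p : ℝ) (hq0 : 0 < Q) (hq1 : Q < 1) (hp0 : 0 < p) (hp1 : p < 1)
    (hw2 : w - b ≤ ε) (hb0 : 0 < b) (hε0 : 0 < ε) :
    p * (2 - Q) * w ≤ 2 * (b + ε) := by
  have hs0 : 0 ≤ p * (2 - Q) := by nlinarith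
  have hs2 : p * (2 - Q) ≤ 2 := by nlinarith
  rcases le_or_gt w 0 with hw0 | hw0
  · have h' : p * (2 - Q) * w ≤ 0 := mul_nonpos_of_nonneg_of_nonpos hs0 hw0
    nlinarith
  · calc p * (2 - Q) * w ≤ 2 * w := by nlinarith
      _ ≤ 2 * (b + ε) := by linarith

lemma micro_claim3 (ν₀ b : ℝ) (h0 : 0 < ν₀) (hb0 : 0 < b) (hb1 : b ≤ 1) :
    ν₀ * b * (2 * b - 1) ≤ ν₀ * b := by
  nlinarith [mul_nonneg (mul_nonneg h0.le hb0.le) (by linarith : (0:ℝ) ≤ 2 - 2 * b)]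

lemma micro_c3 (Q b ν₀ : ℝ) (hq2 : Q ≤ 2 * ν₀) (hb0 : 0 < b) :
    2 * ((Q - 1) * b) ≤ 2 * ((2 * ν₀ - 1) * b) := by nlinarith

lemma micro_e2 (GG m : ℝ) (hG5 : 1/5 ≤ GG) (hm : 0 < m) :
    GG * (-(m/2)) ≤ (1/5) * (-(m/2)) := by nlinarith

lemma micro_t2 (k A dd : ℝ) (hk0 : 0 < k) (hA0 : 0 < A) (hAden : A ≤ dd) :
    4 * k * A / dd ^ 2 ≤ 4 * k / A := by
  have hdd0 : 0 < dd := lt_of_lt_of_le hA0 hAden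
  rw [div_le_div_iff₀ (pow_pos hdd0 2) hA0]
  have h2' := mul_self_le_mul_self hA0.le hAden
  nlinarith

lemma micro_t3 (k A m : ℝ) (hk0 : 0 ≤ k) (hA0 : 0 < A) (hm : 0 < m) (hAm : 40 ≤ A * m) :
    4 * k / A ≤ k * m / 10 := by
  rw [div_le_div_iff₀ hA0 (by norm_num : (0:ℝ) < 10)]
  nlinarith

lemma f2_nonpos (ν₀ b k A w m ε Q GG dd p : ℝ)
    (h0 : 0 < ν₀) (h5 : 5 * ν₀ < 2) (hb0 : 0 < b) (hb1 : b ≤ 1) (hk : k = ν₀ * b)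
    (hm_def : m = b * (2 - 5 * ν₀)) (hε_def : ε = m / (4 * (1 + k)))
    (hw : |w - b| ≤ ε) (hA : 40 / m ≤ A) (hA0 : 0 < A)
    (hp0 : 0 < p) (hp1 : p < 1)
    (hQ : Q = ν₀ + k * p) (hG1 : GG ≤ 1) (hG5 : 1/5 ≤ GG)
    (hdd : dd = A + 2 * Q) :
    k * (GG * (2 * (Q - 1) * w + k * (p * (2 - Q) * w - 1)))
      + 4 * k * A / dd ^ 2 - 8 * p * k ^ 2 * A / dd ^ 3 ≤ 0 := by
  have hk0 : 0 < k := by rw [hk]; positivity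
  have hm : 0 < m := by rw [hm_def]; exact mul_pos hb0 (by linarith)
  have hε0 : 0 < ε := by rw [hε_def]; positivity
  have hkp0 : 0 < k * p := mul_pos hk0 hp0
  have hkp : k * p ≤ ν₀ := by
    have e1 : k * p ≤ k := mul_le_of_le_one_right hk0.le hp1.le
    have e2 : k ≤ ν₀ := by rw [hk]; exact mul_le_of_le_one_right h0.le hb1
    linarith
  have hq0 : 0 < Q := by rw [hQ]; linarith
  have hq2 : Q ≤ 2 * ν₀ := by rw [hQ]; linarith
  have hq1 : Q < 1 := by linarith
  have hdp : 0 < dd := by rw [hdd]; linarith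
  obtain ⟨hw1, hw2⟩ := abs_le.mp hw
  have habs1 : |Q - 1| ≤ 1 := abs_le.mpr ⟨by linarith, by linarith⟩
  have claim1 : (Q - 1) * (w - b) ≤ ε := by
    calc (Q - 1) * (w - b) ≤ |(Q - 1) * (w - b)| := le_abs_self _
      _ = |Q - 1| * |w - b| := abs_mul _ _
      _ ≤ 1 * ε := mul_le_mul habs1 hw (abs_nonneg _) zero_le_one
      _ = ε := one_mul ε
  have claim2 : p * (2 - Q) * w ≤ 2 * (b + ε) :=
    micro_claim2 Q w b ε p hq0 hq1 hp0 hp1 hw2 hb0 hε0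
  have claim3 : k * (2 * b - 1) ≤ ν₀ * b := by rw [hk]; exact micro_claim3 ν₀ b h0 hb0 hb1
  have heq : 2 * ε + 2 * (k * ε) = m / 2 := by
    rw [hε_def]; field_simp; ring
  have c1 : 2 * (Q - 1) * w ≤ 2 * ((Q - 1) * b) + 2 * ε := by linarith [claim1]
  have c2 : k * (p * (2 - Q) * w) ≤ k * (2 * (b + ε)) :=
    mul_le_mul_of_nonneg_left claim2 hk0.le
  have c3 : 2 * ((Q - 1) * b) ≤ 2 * ((2 * ν₀ - 1) * b) := micro_c3 Q b ν₀ hq2 hb0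
  have hB : 2 * (Q - 1) * w + k * (p * (2 - Q) * w - 1) ≤ -(m/2) := by
    linarith [c1, c2, c3, claim3, heq]
  have hg0 : (0:ℝ) ≤ GG := le_trans (by norm_num) hG5
  have e1 : GG * (2 * (Q - 1) * w + k * (p * (2 - Q) * w - 1)) ≤ GG * (-(m/2)) :=
    mul_le_mul_of_nonneg_left hB hg0
  have e2 : GG * (-(m/2)) ≤ (1/5) * (-(m/2)) := micro_e2 GG m hG5 hm
  have t1 : k * (GG * (2 * (Q - 1) * w + k * (p * (2 - Q) * w - 1)))
      ≤ k * ((1/5) * (-(m/2))) :=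
    mul_le_mul_of_nonneg_left (e1.trans e2) hk0.le
  have hAden : A ≤ dd := by rw [hdd]; linarith
  have t2 : 4 * k * A / dd ^ 2 ≤ 4 * k / A := micro_t2 k A dd hk0 hA0 hAden
  have hAm : 40 ≤ A * m := by
    have := (div_le_iff₀ hm).mp hA
    linarith
  have t3 : 4 * k / A ≤ k * m / 10 := micro_t3 k A m hk0.le hA0 hm hAm
  have t4 : (0:ℝ) ≤ 8 * p * k ^ 2 * A / dd ^ 3 := by positivity
  linarith [t1, t2, t3, t4]

set_option maxHeartbeats 1000000 in
lemma auxConcave (ν₀ b k A w : ℝ) (h0 : 0 < ν₀) (h5 : 5 * ν₀ < 2)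
    (hgap : 1/5 ≤ 1 - 2 * ν₀) (hb0 : 0 < b) (hb1 : b ≤ 1) (hk : k = ν₀ * b)
    (hw : |w - b| ≤ b * (2 - 5 * ν₀) / (4 * (1 + k)))
    (hA : 40 / (b * (2 - 5 * ν₀)) ≤ A) :
    ConcaveOn ℝ (Set.Icc 0 1) (fun p =>
      (1 - p) * (1 - Real.exp (-(ν₀ + k * p)))
      + p * (2 - A / (A + 2 * (ν₀ + k * p))
          - Real.exp (-(ν₀ + k * p)) * (1 + (ν₀ + k * p) * w))) := by
  have hk0 : 0 < k := by rw [hk]; positivity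
  have hm : 0 < b * (2 - 5 * ν₀) := mul_pos hb0 (by linarith)
  have hA0 : 0 < A := lt_of_lt_of_le (by positivity) hA
  set m : ℝ := b * (2 - 5 * ν₀) with hm_def
  set ε : ℝ := m / (4 * (1 + k)) with hε_def
  -- notation
  set q : ℝ → ℝ := fun p => ν₀ + k * p with hq_def
  set G : ℝ → ℝ := fun p => Real.exp (-(ν₀ + k * p)) with hG_def
  set den : ℝ → ℝ := fun p => A + 2 * (ν₀ + k * p) with hden_def
  have hden_pos : ∀ p : ℝ, 0 ≤ p → 0 < den p := by
    intro p hp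
    have : 0 ≤ k * p := by positivity
    simp only [hden_def]
    have := mul_nonneg hk0.le hp
    linarith
  -- basic derivatives
  have hqd : ∀ p : ℝ, HasDerivAt (fun x => ν₀ + k * x) k p := by
    intro p
    simpa using ((hasDerivAt_id p).const_mul k).const_add ν₀
  have hGd : ∀ p : ℝ, HasDerivAt G (-k * G p) p := by
    intro p
    have := ((hqd p).neg).exp
    simpa [hG_def, mul_comm] using this
  have hdend : ∀ p : ℝ, HasDerivAt den (2 * k) p := by
    intro p
    exact ((hqd p).const_mul 2).const_add A
  -- first derivative
  set f₁ : ℝ → ℝ := fun p => -(1 - G p) + (1 - p) * (k * G p)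
      + (2 - A / den p - G p * (1 + q p * w))
      + p * (2 * k * A / (den p) ^ 2 + k * G p * (1 + q p * w) - k * G p * w) with hf1_def
  set f₂ : ℝ → ℝ := fun p => k * G p * (2 * (q p - 1) * w + k * (p * (2 - q p) * w - 1))
      + 4 * k * A / (den p) ^ 2 - 8 * p * k ^ 2 * A / (den p) ^ 3 with hf2_def
  have hder1 : ∀ p : ℝ, 0 ≤ p → HasDerivAt (fun p =>
      (1 - p) * (1 - Real.exp (-(ν₀ + k * p)))
      + p * (2 - A / (A + 2 * (ν₀ + k * p))
          - Real.exp (-(ν₀ + k * p)) * (1 + (ν₀ + k * p) * w))) (f₁ p) p := by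
    intro p hp
    have hne : den p ≠ 0 := (hden_pos p hp).ne'
    have hinv := (hasDerivAt_const p A).div (hdend p) hne
    have hGm := (hGd p).mul (((hqd p).mul_const w).const_add 1)
    have hH := ((hasDerivAt_const p 2).sub hinv).sub hGm
    have ha : HasDerivAt (fun x : ℝ => 1 - x) (-1) p := by
      simpa using (hasDerivAt_id p).const_sub 1
    have h1 := ha.mul ((hGd p).const_sub 1)
    have h2 := (hasDerivAt_id p).mul hH
    have := h1.add h2
    refine this.congr_deriv ?_
    simp only [hf1_def, hq_def, Pi.add_apply, Pi.sub_apply, Pi.mul_apply, Pi.div_apply, Pi.pow_apply, Pi.neg_apply, id, Nat.cast_ofNat]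
    field_simp
    ring
  have hder2 : ∀ p : ℝ, 0 ≤ p → HasDerivAt f₁ (f₂ p) p := by
    intro p hp
    have hne : den p ≠ 0 := (hden_pos p hp).ne'
    have hne2 : (den p) ^ 2 ≠ 0 := pow_ne_zero _ hne
    have ha : HasDerivAt (fun x : ℝ => 1 - x) (-1) p := by
      simpa using (hasDerivAt_id p).const_sub 1
    have p1 := ((hGd p).const_sub 1).neg
    have p2 := ha.mul ((hGd p).const_mul k)
    have hinv := (hasDerivAt_const p A).div (hdend p) hne
    have hGm := (hGd p).mul (((hqd p).mul_const w).const_add 1)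
    have p3 := ((hasDerivAt_const p 2).sub hinv).sub hGm
    have hX1 := (hasDerivAt_const p (2 * k * A)).div ((hdend p).pow 2) hne2
    have hX2 := ((hGd p).const_mul k).mul (((hqd p).mul_const w).const_add 1)
    have hX3 := ((hGd p).const_mul k).mul_const w
    have hX := (hX1.add hX2).sub hX3
    have p4 := (hasDerivAt_id p).mul hX
    have := ((p1.add p2).add p3).add p4
    refine this.congr_deriv ?_
    simp only [hf2_def, hq_def, Pi.add_apply, Pi.sub_apply, Pi.mul_apply, Pi.div_apply, Pi.pow_apply, Pi.neg_apply, id, Nat.cast_ofNat]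
    field_simp
    ring
  refine concaveOn_Icc_of_deriv2 _ f₁ f₂ (fun p hp => hder1 p hp.1) (fun p hp => hder2 p hp.1) ?_
  intro p hp
  obtain ⟨hp0, hp1⟩ := hp
  have hGq : G p = Real.exp (-(q p)) := rfl
  have hkp0 : 0 < k * p := mul_pos hk0 hp0
  have hkp : k * p ≤ ν₀ := by
    have e1 : k * p ≤ k := mul_le_of_le_one_right hk0.le hp1.le
    have e2 : k ≤ ν₀ := by rw [hk]; exact mul_le_of_le_one_right h0.le hb1
    linarith
  have hq0 : 0 < q p := by simp only [hq_def]; linarith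
  have hq2 : q p ≤ 2 * ν₀ := by simp only [hq_def]; linarith
  have hG1 : G p ≤ 1 := by rw [hGq, Real.exp_le_one_iff]; linarith
  have hG5 : 1/5 ≤ G p := by
    have := Real.add_one_le_exp (-(q p))
    rw [hGq]; linarith
  have key := f2_nonpos ν₀ b k A w m ε (q p) (G p) (den p) p h0 h5 hb0 hb1 hk hm_def hε_def
    hw hA hA0 hp0 hp1 rfl hG1 hG5 rfl
  calc f₂ p = k * (G p * (2 * (q p - 1) * w + k * (p * (2 - q p) * w - 1)))
      + 4 * k * A / (den p) ^ 2 - 8 * p * k ^ 2 * A / (den p) ^ 3 := by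
        simp only [hf2_def]; ring
    _ ≤ 0 := key

theorem stmt_13 (α D φ₀ ν₀ : ℝ) (hα : 2 < α) (hD : 0 < D) (hφ : 0 < φ₀)
    (hφ2 : φ₀ ≤ 2 * π) (h0 : 0 < ν₀) (h1 : ν₀ ≤ (3 - Real.sqrt 5) / 2)
    (lam A E ν : ℝ → ℝ) (F : ℝ → ℝ → ℝ)
    (hlam : ∀ σ, lam σ = 1 / (2 * π * σ ^ 2))
    (hA : ∀ σ, A σ = φ₀ * lam σ * D ^ 2)
    (hE : ∀ σ, E σ = ∫ ρ in Set.Ioi (0 : ℝ), ∫ φ in (-(φ₀ / 2))..(φ₀ / 2),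
        lam σ * ρ * exp (-(lam σ * φ₀ * ρ ^ 2) / 2) *
          Real.sqrt (ρ ^ 2 + D ^ 2 - 2 * ρ * D * cos φ))
    (hν : ∀ p, ν p = ν₀ * (1 + 2 * p / α))
    (hF : ∀ σ p, F σ p = (1 - p) * (1 - exp (-(ν p)))
        + p * (2 - A σ / (A σ + 2 * ν p)
            - exp (-(ν p)) * (1 + ν p * (1 + ((2 - α) / (α * D)) * E σ)))) :
    ∃ σc > 0, ∀ σ ∈ Set.Ioc (0 : ℝ) σc, ConcaveOn ℝ (Set.Icc 0 1) (F σ) := by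
  have hα0 : (0:ℝ) < α := by linarith
  have hπ : (0:ℝ) < π := Real.pi_pos
  obtain ⟨b, hb_def⟩ : ∃ b : ℝ, b = 2 / α := ⟨_, rfl⟩
  obtain ⟨k, hk_def⟩ : ∃ k : ℝ, k = 2 * ν₀ / α := ⟨_, rfl⟩
  have hb0 : 0 < b := by rw [hb_def]; positivity
  have hb1 : b ≤ 1 := by rw [hb_def, div_le_one hα0]; linarith
  have hk : k = ν₀ * b := by rw [hk_def, hb_def]; ring
  have hk0 : 0 < k := by rw [hk]; positivity
  have hs5 : (11:ℝ)/5 < Real.sqrt 5 := by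
    rw [show (5:ℝ) = 5 by norm_num] at *
    exact (Real.lt_sqrt (by norm_num)).mpr (by norm_num)
  have h5 : 5 * ν₀ < 2 := by nlinarith [h1, hs5]
  have hgap : 1/5 ≤ 1 - 2 * ν₀ := by nlinarith [h1, hs5]
  obtain ⟨m, hm_def⟩ : ∃ m : ℝ, m = b * (2 - 5 * ν₀) := ⟨_, rfl⟩
  have hm : 0 < m := by rw [hm_def]; exact mul_pos hb0 (by linarith)
  obtain ⟨ε, hε_def⟩ : ∃ ε : ℝ, ε = m / (4 * (1 + k)) := ⟨_, rfl⟩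
  have hε0 : 0 < ε := by rw [hε_def]; positivity
  obtain ⟨σ₁, hσ1_def⟩ : ∃ s : ℝ, s = D * ε * Real.sqrt φ₀ / (4 * Real.sqrt (2*π)) := ⟨_, rfl⟩
  obtain ⟨σ₂, hσ2_def⟩ : ∃ s : ℝ, s = Real.sqrt (φ₀ * D^2 * m / (80*π)) := ⟨_, rfl⟩
  have hsq2π : 0 < Real.sqrt (2*π) := Real.sqrt_pos.mpr (by positivity)
  have hsqφ : 0 < Real.sqrt φ₀ := Real.sqrt_pos.mpr hφ
  have hσ1 : 0 < σ₁ := by rw [hσ1_def]; positivity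
  have hσ2 : 0 < σ₂ := by rw [hσ2_def]; exact Real.sqrt_pos.mpr (by positivity)
  refine ⟨min σ₁ σ₂, lt_min hσ1 hσ2, ?_⟩
  rintro σ ⟨hσ0, hσc⟩
  have hlamσ : 0 < lam σ := by rw [hlam σ]; positivity
  have hEb : |E σ - D| ≤ 4 / Real.sqrt (lam σ * φ₀) := by
    rw [hE σ]; exact Ebound D φ₀ (lam σ) hD hφ hlamσ
  have hlamφ : Real.sqrt (lam σ * φ₀) = Real.sqrt φ₀ / (Real.sqrt (2*π) * σ) := by
    rw [show lam σ * φ₀ = (Real.sqrt φ₀ / (Real.sqrt (2*π) * σ))^2 by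
      rw [div_pow, mul_pow, Real.sq_sqrt hφ.le, Real.sq_sqrt (by positivity : (0:ℝ) ≤ 2*π),
        hlam σ]
      field_simp]
    exact Real.sqrt_sq (by positivity)
  have hED : |E σ - D| ≤ D * ε := by
    refine hEb.trans ?_
    rw [hlamφ, div_div_eq_mul_div, div_le_iff₀ hsqφ]
    have hσ1' : σ ≤ σ₁ := le_trans hσc (min_le_left _ _)
    rw [hσ1_def] at hσ1'
    rw [le_div_iff₀ (by positivity : (0:ℝ) < 4 * Real.sqrt (2*π))] at hσ1'
    nlinarith [hσ1']
  have hAσ : 40 / m ≤ A σ := by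
    rw [hA σ, hlam σ]
    have hσ2' : σ ≤ σ₂ := le_trans hσc (min_le_right _ _)
    rw [hσ2_def] at hσ2'
    have hσsq : σ^2 ≤ φ₀ * D^2 * m / (80*π) := by
      have h' := pow_le_pow_left₀ hσ0.le hσ2' 2
      rwa [Real.sq_sqrt (by positivity)] at h'
    have h80 : σ^2 * (80*π) ≤ φ₀ * D^2 * m := (le_div_iff₀ (by positivity)).mp hσsq
    rw [div_le_iff₀ hm, show φ₀ * (1 / (2*π*σ^2)) * D^2 * m = (φ₀ * D^2 * m) / (2*π*σ^2) by
      ring, le_div_iff₀ (by positivity)]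
    linarith
  have hαne : α ≠ 0 := ne_of_gt hα0
  have hDne : D ≠ 0 := ne_of_gt hD
  obtain ⟨w, hw_def⟩ : ∃ w : ℝ, w = 1 + (2-α)/(α*D) * E σ := ⟨_, rfl⟩
  have hwb : |w - b| ≤ ε := by
    have hwe : w - b = (2-α)/(α*D) * (E σ - D) := by
      rw [hw_def, hb_def]; field_simp; ring
    rw [hwe, abs_mul, show |(2-α)/(α*D)| = (α-2)/(α*D) by
      rw [abs_div, abs_of_neg (by linarith : 2-α < 0), abs_of_pos (mul_pos hα0 hD)]
      ring]
    calc (α-2)/(α*D) * |E σ - D| ≤ (α-2)/(α*D) * (D*ε) := by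
          exact mul_le_mul_of_nonneg_left hED (div_nonneg (by linarith) (mul_pos hα0 hD).le)
      _ = (α-2)/α * ε := by field_simp
      _ ≤ 1 * ε := by
          apply mul_le_mul_of_nonneg_right _ hε0.le
          rw [div_le_one hα0]; linarith
      _ = ε := one_mul ε
  have hFσ : F σ = fun p => (1 - p) * (1 - Real.exp (-(ν₀ + k * p)))
      + p * (2 - A σ / (A σ + 2 * (ν₀ + k * p))
          - Real.exp (-(ν₀ + k * p)) * (1 + (ν₀ + k * p) * w)) := by
    funext p
    rw [hF σ p, hν p, show ν₀ * (1 + 2 * p / α) = ν₀ + k * p by rw [hk_def]; field_simp,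
      hw_def]
  rw [hFσ]
  rw [hm_def] at hAσ
  rw [hε_def, hm_def] at hwb
  exact auxConcave ν₀ b k (A σ) w h0 h5 hgap hb0 hb1 hk hwb hAσ
end

section
/- Let α > 2 and φ₀ ∈ (0, 2π] be real numbers. Define erf(x) = (2/√π)·∫₀^x e^{−t²} dt, γ(s, φ₀) = √(π/2)·{1 + [8·(1 − cos(φ₀/4))/φ₀ − 2]·erf(1/(√2·s))} for s > 0, and φ_c = (1/4)·(1 − 2/α)·γ(1/√2, φ₀). Then for every s with 0 < s ≤ √(1/α + φ_c²) − φ_c, one has 2α·s² + (α − 2)·γ(s, φ₀)·s − 2 ≤ 0. -/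
open MeasureTheory Real

lemma aux_intInt (a b : ℝ) : IntervalIntegrable (fun t : ℝ => exp (-t ^ 2)) volume a b :=
  (Continuous.intervalIntegrable (by continuity) a b)

lemma aux_erf_nonneg {x : ℝ} (hx : 0 ≤ x) : 0 ≤ erf x := by
  apply mul_nonneg (by positivity)
  exact intervalIntegral.integral_nonneg hx (fun t _ => (exp_pos _).le)

lemma aux_erf_mono {a b : ℝ} (hab : a ≤ b) : erf a ≤ erf b := by
  unfold erf
  have h := intervalIntegral.integral_add_adjacent_intervals (aux_intInt 0 a) (aux_intInt a b)
  apply mul_le_mul_of_nonneg_left _ (by positivity)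
  rw [← h]
  have : 0 ≤ ∫ t in a..b, exp (-t ^ 2) :=
    intervalIntegral.integral_nonneg hab (fun t _ => (exp_pos _).le)
  linarith

lemma aux_erf_le_one {x : ℝ} (hx : 0 ≤ x) : erf x ≤ 1 := by
  have hInt : IntegrableOn (fun t : ℝ => exp (-t ^ 2)) (Set.Ioi 0) volume := by
    have := (integrable_exp_neg_mul_sq (b := 1) one_pos).integrableOn (s := Set.Ioi (0:ℝ))
    simpa using this
  have h1 : (∫ t in (0:ℝ)..x, exp (-t ^ 2)) ≤ ∫ t in Set.Ioi (0:ℝ), exp (-t^2) := by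
    rw [intervalIntegral.integral_of_le hx]
    apply setIntegral_mono_set hInt
    · exact Filter.Eventually.of_forall (fun t => (exp_pos _).le)
    · exact Filter.Eventually.of_forall (fun t ht => ht.1)
  have h2 : (∫ t in Set.Ioi (0:ℝ), exp (-t^2)) = Real.sqrt π / 2 := by
    have := integral_gaussian_Ioi 1
    simpa using this
  rw [h2] at h1
  unfold erf
  rw [div_mul_eq_mul_div, div_le_one (by positivity)]
  nlinarith [Real.sqrt_nonneg π]

set_option maxHeartbeats 1000000 in
theorem stmt_15 (α φ₀ : ℝ) (hα : 2 < α) (hφ : 0 < φ₀) (hφ2 : φ₀ ≤ 2 * π)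
    (φc : ℝ) (hφc : φc = (1 / 4) * (1 - 2 / α) * gammaFn (1 / Real.sqrt 2) φ₀)
    (s : ℝ) (hs0 : 0 < s) (hs : s ≤ Real.sqrt (1 / α + φc ^ 2) - φc) :
    2 * α * s ^ 2 + (α - 2) * gammaFn s φ₀ * s - 2 ≤ 0 := by
  have hπ4 : π ≤ 4 := by linarith [Real.pi_le_four]
  -- opaque constants
  obtain ⟨u, hu⟩ : ∃ u, Real.sqrt 2 = u := ⟨_, rfl⟩
  have hu0 : 0 < u := hu ▸ (by positivity)
  have hu2 : u * u = 2 := by rw [← hu]; exact Real.mul_self_sqrt (by norm_num)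
  obtain ⟨r, hr⟩ : ∃ r, Real.sqrt (π / 2) = r := ⟨_, rfl⟩
  have hr0 : 0 < r := hr ▸ (by positivity)
  have hru : r ≤ u := by
    rw [← hu, ← hr]; exact Real.sqrt_le_sqrt (by linarith)
  obtain ⟨E, hE⟩ : ∃ E, erf 1 = E := ⟨_, rfl⟩
  have hE0 : 0 ≤ E := hE ▸ aux_erf_nonneg zero_le_one
  have hE1 : E ≤ 1 := hE ▸ aux_erf_le_one zero_le_one
  obtain ⟨c, hc⟩ : ∃ c, 8 * (1 - cos (φ₀ / 4)) / φ₀ - 2 = c := ⟨_, rfl⟩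
  -- bounds on c
  have hcos_le : 1 - cos (φ₀ / 4) ≤ (φ₀ / 4) ^ 2 / 2 := by
    have hx : 0 ≤ φ₀ / 8 := by linarith
    have h1 : Real.sin (φ₀ / 8) ≤ φ₀ / 8 := Real.sin_le hx
    have h2 : 0 ≤ Real.sin (φ₀ / 8) := by
      apply Real.sin_nonneg_of_nonneg_of_le_pi hx
      nlinarith [Real.pi_gt_three]
    have h3 : cos (φ₀ / 4) = 1 - 2 * Real.sin (φ₀ / 8) ^ 2 := by
      have h4 := Real.cos_two_mul (φ₀ / 8)
      have h5 := Real.sin_sq_add_cos_sq (φ₀ / 8)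
      have h6 : φ₀ / 4 = 2 * (φ₀ / 8) := by ring
      rw [h6, h4]; nlinarith
    rw [h3]; nlinarith
  have hc_le : c ≤ 0 := by
    rw [← hc, sub_nonpos, div_le_iff₀ hφ]
    nlinarith [Real.pi_le_four]
  have hc_ge : -2 ≤ c := by
    rw [← hc]
    have : 0 ≤ 8 * (1 - cos (φ₀ / 4)) / φ₀ := by
      apply div_nonneg _ hφ.le
      nlinarith [Real.cos_le_one (φ₀ / 4)]
    linarith
  -- G = gammaFn (1/√2) φ₀ in terms of opaque constants
  obtain ⟨G, hG⟩ : ∃ G, gammaFn (1 / Real.sqrt 2) φ₀ = G := ⟨_, rfl⟩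
  have hGval : G = r * (1 + c * E) := by
    have h1 : Real.sqrt 2 * (1 / Real.sqrt 2) = 1 := by
      rw [hu]; field_simp
    rw [← hG, gammaFn, hr, hc, h1, one_div_one, hE]
  rw [hG] at hφc
  -- lower bound for G
  have hGlb : -u ≤ G := by
    have h1 : -1 ≤ 1 + c * E := by nlinarith
    have h2 : r * (-1) ≤ r * (1 + c * E) := mul_le_mul_of_nonneg_left h1 hr0.le
    rw [hGval]; linarith
  have hβ : 0 < 1 - 2 / α := by
    have : 2 / α < 1 := (div_lt_one (by linarith)).mpr hα
    linarith
  have hβ1 : 1 - 2 / α < 1 := by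
    have : 0 < 2 / α := by positivity
    linarith
  -- w = 1/√2
  have hw : (1:ℝ) / Real.sqrt 2 = u / 2 := by
    rw [hu, div_eq_div_iff hu0.ne' two_ne_zero, one_mul, hu2]
  -- φc lower bound
  have hφclb : -(u / 4) ≤ φc := by
    rw [hφc]
    have h1 : (1 - 2 / α) * (-u) ≤ (1 - 2 / α) * G :=
      mul_le_mul_of_nonneg_left hGlb hβ.le
    have h2 : (1 - 2 / α) * u ≤ 1 * u :=
      mul_le_mul_of_nonneg_right hβ1.le hu0.le
    nlinarith [h1, h2]
  -- s ≤ 1/√2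
  have hs_le : s ≤ u / 2 := by
    have hpos : 0 ≤ u / 2 + φc := by linarith
    have hkey2 : 1 / α - 1 / 2 ≤ u * φc := by
      rw [hφc]
      have h1 : (1 - 2 / α) * (-u) ≤ (1 - 2 / α) * G :=
        mul_le_mul_of_nonneg_left hGlb hβ.le
      have h3 : u * ((1 - 2 / α) * (-u)) ≤ u * ((1 - 2 / α) * G) :=
        mul_le_mul_of_nonneg_left h1 hu0.le
      have h4 : u * ((1 - 2 / α) * (-u)) = -2 + 4 / α := by
        have h5 : 4 / α = 2 * (2 / α) := by ring
        rw [h5]; linear_combination (-(1 - 2 / α)) * hu2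
      have h5 : u * (1 / 4 * (1 - 2 / α) * G) = 1 / 4 * (u * ((1 - 2 / α) * G)) := by
        ring
      rw [h5]
      have h6 : -2 + 4 / α ≤ u * ((1 - 2 / α) * G) := h4 ▸ h3
      have h7 : 1 / α - 1 / 2 = 1 / 4 * (-2 + 4 / α) := by ring
      rw [h7]
      exact mul_le_mul_of_nonneg_left h6 (by norm_num)
    have key : 1 / α + φc ^ 2 ≤ (u / 2 + φc) ^ 2 := by nlinarith
    have h1 : Real.sqrt (1 / α + φc ^ 2) ≤ u / 2 + φc := by
      calc Real.sqrt (1 / α + φc ^ 2) ≤ Real.sqrt ((u / 2 + φc) ^ 2) :=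
            Real.sqrt_le_sqrt key
        _ = u / 2 + φc := Real.sqrt_sq hpos
    linarith
  -- gammaFn s φ₀ ≤ G
  obtain ⟨E', hE'⟩ : ∃ E', erf (1 / (Real.sqrt 2 * s)) = E' := ⟨_, rfl⟩
  have hγval : gammaFn s φ₀ = r * (1 + c * E') := by
    rw [gammaFn, hr, hc, hE']
  have hEE' : E ≤ E' := by
    rw [← hE, ← hE']
    apply aux_erf_mono
    rw [le_div_iff₀ (by rw [hu]; exact mul_pos hu0 hs0), one_mul, hu]
    have h6 : u * s ≤ u * (u / 2) := mul_le_mul_of_nonneg_left hs_le hu0.le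
    nlinarith [h6]
  have hγle : gammaFn s φ₀ ≤ G := by
    rw [hγval, hGval]
    have : c * E' ≤ c * E := by nlinarith
    nlinarith
  -- final quadratic bound
  obtain ⟨R, hR⟩ : ∃ R, Real.sqrt (1 / α + φc ^ 2) = R := ⟨_, rfl⟩
  rw [hR] at hs
  have hαpos : (0:ℝ) < α := by linarith
  have hR2 : R ^ 2 = 1 / α + φc ^ 2 := by
    rw [← hR]; exact Real.sq_sqrt (by positivity)
  have hRlb : -R ≤ φc := by
    have h1 : |φc| ≤ R := by
      rw [← hR, ← Real.sqrt_sq_eq_abs]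
      apply Real.sqrt_le_sqrt
      have : 0 < 1 / α := by positivity
      linarith
    cases abs_le.mp h1 with
    | intro h _ => exact h
  have hsum : (s + φc) ^ 2 ≤ R ^ 2 :=
    sq_le_sq' (by linarith) (by linarith)
  have hG4 : (α - 2) * G = 4 * α * φc := by
    have hαinv : α * (2 / α) = 2 := by field_simp
    rw [hφc]
    linear_combination G * hαinv
  have hγs : (α - 2) * gammaFn s φ₀ * s ≤ (α - 2) * G * s := by
    apply mul_le_mul_of_nonneg_right _ hs0.le
    exact mul_le_mul_of_nonneg_left hγle (by linarith)
  have hquad : 2 * α * s ^ 2 + 4 * α * φc * s - 2 ≤ 0 := by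
    have h1 : s ^ 2 + 2 * φc * s ≤ 1 / α := by nlinarith
    have h2 : α * (s ^ 2 + 2 * φc * s) ≤ α * (1 / α) :=
      mul_le_mul_of_nonneg_left h1 hαpos.le
    rw [mul_one_div, div_self hαpos.ne'] at h2
    nlinarith
  calc 2 * α * s ^ 2 + (α - 2) * gammaFn s φ₀ * s - 2
      ≤ 2 * α * s ^ 2 + (α - 2) * G * s - 2 := by linarith
    _ = 2 * α * s ^ 2 + 4 * α * φc * s - 2 := by rw [hG4]
    _ ≤ 0 := hquad
end
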